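/- arXiv:1301.1157 — 9 statements merged into one kernel-verified Lean document; each statement's English description precedes it below -/
import Mathlib

section
/- Let P be a modular partition of a graph G. For every module M of G, the set {X ∈ P : M ∩ X ≠ ∅} is a module of the quotient graph G/P. -/
/-- `M` is a module of `G`: every vertex outside `M` is adjacent to all of `M` or to none. -/
def SimpleGraph.IsModule {V : Type*} (G : SimpleGraph V) (M : Set V) : Prop :=
  ∀ v ∉ M, (∀ m ∈ M, G.Adj v m) ∨ (∀ m ∈ M, ¬ G.Adj v m)

/-- `G` is prime: at least 4 vertices and all modules are trivial. -/
def SimpleGraph.IsPrimeGraph {V : Type*} [Fintype V] (G : SimpleGraph V) : Prop :=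
  4 ≤ Fintype.card V ∧
    ∀ M : Set V, G.IsModule M → M = ∅ ∨ (∃ v, M = {v}) ∨ M = Set.univ

/-- `H` on `V ⊕ W` is an extension of `G` on `V`: it induces `G` on the `inl` copy of `V`. -/
def SimpleGraph.IsExtension {V W : Type*} (G : SimpleGraph V) (H : SimpleGraph (V ⊕ W)) : Prop :=
  ∀ u v : V, H.Adj (Sum.inl u) (Sum.inl v) ↔ G.Adj u v

/-- The prime bound of `G`: the least `p` such that `G` has a prime `p`-extension. -/
noncomputable def SimpleGraph.primeBound {V : Type*} [Fintype V] (G : SimpleGraph V) : ℕ :=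
  sInf {p : ℕ | ∃ H : SimpleGraph (V ⊕ Fin p), G.IsExtension H ∧ H.IsPrimeGraph}

/-- The modular clique number: largest size of a module of `G` that is a clique. -/
noncomputable def SimpleGraph.modularCliqueNumber {V : Type*} [Fintype V]
    (G : SimpleGraph V) : ℕ :=
  sSup {n : ℕ | ∃ M : Set V, G.IsModule M ∧ G.IsClique M ∧ M.ncard = n}

/-- The modular stability number: `ω_M` of the complement. -/
noncomputable def SimpleGraph.modularStabilityNumber {V : Type*} [Fintype V]
    (G : SimpleGraph V) : ℕ :=
  Gᶜ.modularCliqueNumber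

/-- The number of isolated vertices of `G`. -/
noncomputable def SimpleGraph.isolatedCount {V : Type*} [Fintype V] (G : SimpleGraph V) : ℕ :=
  {v : V | ∀ w, ¬ G.Adj v w}.ncard

/-- `P` is a modular partition of `G`. -/
def SimpleGraph.IsModularPartition {V : Type*} (G : SimpleGraph V) (P : Set (Set V)) : Prop :=
  (∀ X ∈ P, X.Nonempty) ∧ ⋃₀ P = Set.univ ∧ P.Pairwise Disjoint ∧ ∀ X ∈ P, G.IsModule X

/-- The quotient graph `G/P` of a (modular) partition `P`. -/
def SimpleGraph.quotientGraph {V : Type*} (G : SimpleGraph V) (P : Set (Set V)) :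
    SimpleGraph P where
  Adj X Y := (X : Set V) ≠ (Y : Set V) ∧ ∃ u ∈ (X : Set V), ∃ v ∈ (Y : Set V), G.Adj u v
  symm := by
    constructor
    rintro X Y ⟨hne, u, hu, v, hv, h⟩
    exact ⟨fun h' => hne h'.symm, v, hv, u, hu, h.symm⟩
  loopless := by
    constructor
    rintro X ⟨hne, -⟩
    exact hne rfl

/-- `M` is a strong module of `G`. -/
def SimpleGraph.IsStrongModule {V : Type*} (G : SimpleGraph V) (M : Set V) : Prop :=
  G.IsModule M ∧ ∀ N : Set V, G.IsModule N → (M ∩ N).Nonempty → M ⊆ N ∨ N ⊆ M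

/-- for a module `M` of `G`, the parts meeting `M` form a module of `G/P`. -/
theorem parts_meeting_module_is_quotient_module {V : Type*} (G : SimpleGraph V)
    (P : Set (Set V)) (hP : G.IsModularPartition P) (M : Set V) (hM : G.IsModule M) :
    (G.quotientGraph P).IsModule {X : P | ((X : Set V) ∩ M).Nonempty} := by
  obtain ⟨hne, hcov, hdis, hmod⟩ := hP
  rcases M.eq_empty_or_nonempty with rfl | ⟨m0, hm0⟩
  · intro Y hY
    left
    rintro X hX
    simp [Set.mem_setOf_eq] at hX
  intro Y hY
  simp only [Set.mem_setOf_eq, Set.not_nonempty_iff_eq_empty] at hY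
  have hm0Y : m0 ∉ (Y : Set V) := fun h => by
    have : m0 ∈ (Y : Set V) ∩ M := ⟨h, hm0⟩
    rw [hY] at this; exact this
  rcases hmod Y Y.2 m0 hm0Y with hall | hnone
  · -- m0 adjacent to all of Y : Y is adjacent to all parts meeting M
    left
    rintro X hX
    obtain ⟨m, hmX, hmM⟩ := hX
    obtain ⟨y, hy⟩ := hne Y Y.2
    have hyM : y ∉ M := fun h => by
      have : y ∈ (Y : Set V) ∩ M := ⟨hy, h⟩
      rw [hY] at this; exact this
    have hym : G.Adj y m := by
      rcases hM y hyM with hA | hB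
      · exact hA m hmM
      · exact absurd (hall y hy).symm (hB m0 hm0)
    have hmY : m ∉ (Y : Set V) := fun h => by
      have : m ∈ (Y : Set V) ∩ M := ⟨h, hmM⟩
      rw [hY] at this; exact this
    exact ⟨fun h => hmY (h ▸ hmX), y, hy, m, hmX, hym⟩
  · -- m0 adjacent to none of Y : Y is adjacent to no part meeting M
    right
    rintro X ⟨m, hmX, hmM⟩ ⟨hneq, u, huY, v, hvX, hadj⟩
    have huM : u ∉ M := fun h => by
      have : u ∈ (Y : Set V) ∩ M := ⟨huY, h⟩
      rw [hY] at this; exact this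
    have hunone : ∀ w ∈ M, ¬ G.Adj u w := by
      rcases hM u huM with hA | hB
      · exact absurd (hA m0 hm0).symm (hnone u huY)
      · exact hB
    have huX : u ∉ (X : Set V) := fun h => by
      have hd : Disjoint (Y : Set V) (X : Set V) := hdis Y.2 X.2 hneq
      exact (hd.ne_of_mem huY h) rfl
    rcases hmod X X.2 u huX with hA | hB
    · exact hunone m hmM (hA m hmX)
    · exact hB v hvX hadj
end

section
/- Let S and S' be disjoint finite sets with |S| ≥ 2 and |S'| = ⌈log₂(|S|+1)⌉. Then there exists a prime graph G on vertex set S ∪ S' such that both S and S' are stable (independent) sets in G. -/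
/-- A stable (independent) set: a clique of the complement. -/
def SimpleGraph.IsStableSet {V : Type*} (G : SimpleGraph V) (S : Set V) : Prop :=
  Gᶜ.IsClique S

section PrimeConstruction

open SimpleGraph

variable {n k : ℕ}

/-- The bipartite graph on `Fin n ⊕ Fin k` determined by the relation `A`. -/
private def bip (A : Fin n → Fin k → Prop) : SimpleGraph (Fin n ⊕ Fin k) where
  Adj x y := (∃ i j, x = Sum.inl i ∧ y = Sum.inr j ∧ A i j) ∨
    (∃ i j, x = Sum.inr j ∧ y = Sum.inl i ∧ A i j)
  symm := by
    constructor
    rintro x y (⟨i, j, rfl, rfl, h⟩ | ⟨i, j, rfl, rfl, h⟩)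
    · exact Or.inr ⟨i, j, rfl, rfl, h⟩
    · exact Or.inl ⟨i, j, rfl, rfl, h⟩
  loopless := by
    constructor
    rintro x (⟨i, j, rfl, h, -⟩ | ⟨i, j, rfl, h, -⟩) <;> simp at h

private lemma bip_adj_inl_inr {A : Fin n → Fin k → Prop} {i : Fin n} {j : Fin k} :
    (bip A).Adj (Sum.inl i) (Sum.inr j) ↔ A i j := by
  simp [bip]

private lemma bip_adj_inr_inl {A : Fin n → Fin k → Prop} {i : Fin n} {j : Fin k} :
    (bip A).Adj (Sum.inr j) (Sum.inl i) ↔ A i j := by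
  simp [bip]

private lemma bip_not_adj_inl_inl {A : Fin n → Fin k → Prop} {i i' : Fin n} :
    ¬ (bip A).Adj (Sum.inl i) (Sum.inl i') := by
  simp [bip]

private lemma bip_not_adj_inr_inr {A : Fin n → Fin k → Prop} {j j' : Fin k} :
    ¬ (bip A).Adj (Sum.inr j) (Sum.inr j') := by
  simp [bip]

private lemma bip_prime (hn : 2 ≤ n) (hk : 2 ≤ k) (A : Fin n → Fin k → Prop)
    (hne : ∀ i, ∃ j, A i j)
    (hinj : ∀ i₁ i₂ : Fin n, (∀ j, A i₁ j ↔ A i₂ j) → i₁ = i₂)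
    (hsep : ∀ j₁ j₂ : Fin k, j₁ ≠ j₂ → ∃ i, ¬(A i j₁ ↔ A i j₂))
    (hstar : ∀ j : Fin k, ∃ i, A i ⟨0, by omega⟩ ∧ A i j) :
    (bip A).IsPrimeGraph := by
  constructor
  · simp only [Fintype.card_sum, Fintype.card_fin]
    omega
  intro M hM
  by_cases hM0 : M = ∅
  · exact Or.inl hM0
  by_cases hM1 : ∃ v, M = {v}
  · exact Or.inr (Or.inl hM1)
  right; right
  obtain ⟨x, hx, y, hy, hxy⟩ : ∃ x ∈ M, ∃ y ∈ M, x ≠ y := by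
    by_contra h
    push_neg at h
    obtain ⟨x, hx⟩ := Set.nonempty_iff_ne_empty.mpr hM0
    refine hM1 ⟨x, ?_⟩
    ext z
    simp only [Set.mem_singleton_iff]
    exact ⟨fun hz => h z hz x hx, fun hz => hz ▸ hx⟩
  -- Step 1: M contains a right-side vertex
  have hMt : ∃ j : Fin k, Sum.inr j ∈ M := by
    by_contra h
    push_neg at h
    obtain ⟨i₁, rfl⟩ : ∃ i, x = Sum.inl i := by
      cases x with
      | inl i => exact ⟨i, rfl⟩
      | inr j => exact absurd hx (h j)
    obtain ⟨i₂, rfl⟩ : ∃ i, y = Sum.inl i := by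
      cases y with
      | inl i => exact ⟨i, rfl⟩
      | inr j => exact absurd hy (h j)
    have hii : i₁ ≠ i₂ := fun e => hxy (by rw [e])
    have : ¬ ∀ j, A i₁ j ↔ A i₂ j := fun hall => hii (hinj _ _ hall)
    push_neg at this
    obtain ⟨j, hj⟩ := this
    rcases hM (Sum.inr j) (h j) with hall | hnone
    · have h1 := bip_adj_inr_inl.mp (hall _ hx)
      have h2 := bip_adj_inr_inl.mp (hall _ hy)
      rcases hj with ⟨-, q⟩ | ⟨p, -⟩
      · exact q h2
      · exact p h1
    · have h1 := fun hA => hnone _ hx (bip_adj_inr_inl.mpr hA)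
      have h2 := fun hA => hnone _ hy (bip_adj_inr_inl.mpr hA)
      rcases hj with ⟨p, -⟩ | ⟨-, q⟩
      · exact h1 p
      · exact h2 q
  -- Step 2: M contains a left-side vertex
  have hMs : ∃ i : Fin n, Sum.inl i ∈ M := by
    by_contra h
    push_neg at h
    obtain ⟨j₁, rfl⟩ : ∃ j, x = Sum.inr j := by
      cases x with
      | inl i => exact absurd hx (h i)
      | inr j => exact ⟨j, rfl⟩
    obtain ⟨j₂, rfl⟩ : ∃ j, y = Sum.inr j := by
      cases y with
      | inl i => exact absurd hy (h i)
      | inr j => exact ⟨j, rfl⟩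
    have hjj : j₁ ≠ j₂ := fun e => hxy (by rw [e])
    obtain ⟨i, hi⟩ := hsep j₁ j₂ hjj
    rcases hM (Sum.inl i) (h i) with hall | hnone
    · have h1 := bip_adj_inl_inr.mp (hall _ hx)
      have h2 := bip_adj_inl_inr.mp (hall _ hy)
      exact hi (iff_of_true h1 h2)
    · have h1 := fun hA => hnone _ hx (bip_adj_inl_inr.mpr hA)
      have h2 := fun hA => hnone _ hy (bip_adj_inl_inr.mpr hA)
      exact hi (iff_of_false h1 h2)
  obtain ⟨j₀, hj₀⟩ := hMt
  obtain ⟨i₀, hi₀⟩ := hMs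
  -- Step 3: the "neighbourhood" of a left vertex of M is inside M
  have step3 : ∀ i, Sum.inl i ∈ M → ∀ j, A i j → Sum.inr j ∈ M := by
    intro i hi j hij
    by_contra hjM
    rcases hM _ hjM with hall | hnone
    · exact bip_not_adj_inr_inr (hall _ hj₀)
    · exact hnone _ hi (bip_adj_inr_inl.mpr hij)
  -- Step 4: left vertices outside M are nonadjacent to right vertices of M
  have step4 : ∀ i, Sum.inl i ∉ M → ∀ j, Sum.inr j ∈ M → ¬ A i j := by
    intro i hi j hj hA
    rcases hM _ hi with hall | hnone
    · exact bip_not_adj_inl_inl (hall _ hi₀)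
    · exact hnone _ hj (bip_adj_inl_inr.mpr hA)
  have hz0 : Sum.inr (⟨0, by omega⟩ : Fin k) ∈ M := by
    obtain ⟨i, hA0, hAj⟩ := hstar j₀
    by_cases hi : Sum.inl i ∈ M
    · exact step3 i hi _ hA0
    · exact absurd hAj (step4 i hi j₀ hj₀)
  have hMtall : ∀ j, Sum.inr j ∈ M := by
    intro j
    obtain ⟨i, hA0, hAj⟩ := hstar j
    by_cases hi : Sum.inl i ∈ M
    · exact step3 i hi _ hAj
    · exact absurd hA0 (step4 i hi _ hz0)
  have hMsall : ∀ i, Sum.inl i ∈ M := by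
    intro i
    by_contra hi
    obtain ⟨j, hA⟩ := hne i
    exact step4 i hi j (hMtall j) hA
  rw [Set.eq_univ_iff_forall]
  intro z
  cases z with
  | inl i => exact hMsall i
  | inr j => exact hMtall j

/-- Construction of a suitable bipartite relation (binary encoding with a tweak). -/
private lemma exists_good_A (n k : ℕ) (hn : 2 ≤ n) (hk : 2 ≤ k)
    (hpow : n + 1 ≤ 2 ^ k) (hlow : 2 ^ (k - 1) ≤ n) :
    ∃ A : Fin n → Fin k → Prop,
      (∀ i, ∃ j, A i j) ∧
      (∀ i₁ i₂ : Fin n, (∀ j, A i₁ j ↔ A i₂ j) → i₁ = i₂) ∧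
      (∀ j₁ j₂ : Fin k, j₁ ≠ j₂ → ∃ i, ¬(A i j₁ ↔ A i j₂)) ∧
      (∀ j : Fin k, ∃ i, A i ⟨0, by omega⟩ ∧ A i j) := by
  set a : ℕ → ℕ := fun i => if n = 2 ^ (k - 1) ∧ i = n - 1 then n + 1 else i + 1 with ha
  have hksplit : (2:ℕ) ^ k = 2 * 2 ^ (k - 1) := by
    conv_lhs => rw [show k = (k - 1) + 1 by omega]
    rw [pow_succ']
  have ha_pos : ∀ i, 0 < a i := by
    intro i
    simp only [ha]
    split_ifs <;> omega
  have ha_lt : ∀ i, i < n → a i < 2 ^ k := by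
    intro i hi
    simp only [ha]
    split_ifs with h
    · omega
    · omega
  have ha_inj : ∀ i₁ i₂, i₁ < n → i₂ < n → a i₁ = a i₂ → i₁ = i₂ := by
    intro i₁ i₂ h1 h2 he
    simp only [ha] at he
    split_ifs at he <;> omega
  refine ⟨fun i j => Nat.testBit (a i.val) j.val = true, ?_, ?_, ?_, ?_⟩
  · -- every row is nonempty
    intro i
    obtain ⟨p, hp, -⟩ := Nat.exists_most_significant_bit
      (show a i.val ≠ 0 by have := ha_pos i.val; omega)
    have hpk : p < k := by
      by_contra hcon
      have hlt : a i.val < 2 ^ p :=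
        lt_of_lt_of_le (ha_lt _ i.2) (Nat.pow_le_pow_right (by norm_num) (by omega))
      rw [Nat.testBit_lt_two_pow hlt] at hp
      simp at hp
    exact ⟨⟨p, hpk⟩, hp⟩
  · -- rows are pairwise distinct
    intro i₁ i₂ hiff
    have h12 : a i₁.val = a i₂.val := by
      apply Nat.eq_of_testBit_eq
      intro p
      by_cases hp : p < k
      · exact Bool.eq_iff_iff.mpr (hiff ⟨p, hp⟩)
      · rw [Nat.testBit_lt_two_pow
            (lt_of_lt_of_le (ha_lt _ i₁.2) (Nat.pow_le_pow_right (by norm_num) (by omega))),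
          Nat.testBit_lt_two_pow
            (lt_of_lt_of_le (ha_lt _ i₂.2) (Nat.pow_le_pow_right (by norm_num) (by omega)))]
    exact Fin.ext (ha_inj _ _ i₁.2 i₂.2 h12)
  · -- columns are pairwise separated
    have hsing : ∀ j : Fin k, j.val + 1 < k →
        ∃ i : Fin n, ∀ j' : Fin k, (Nat.testBit (a i.val) j'.val = true ↔ j' = j) := by
      intro j hj
      have h1 : 0 < 2 ^ j.val := Nat.pow_pos (by norm_num)
      have h2 : 2 ^ j.val < 2 ^ (k - 1) := Nat.pow_lt_pow_right (by norm_num) (by omega)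
      refine ⟨⟨2 ^ j.val - 1, by omega⟩, ?_⟩
      have haval : a (2 ^ j.val - 1) = 2 ^ j.val := by
        simp only [ha]
        rw [if_neg, Nat.sub_add_cancel h1]
        rintro ⟨hn1, hn2⟩
        omega
      intro j'
      show Nat.testBit (a (2 ^ j.val - 1)) j'.val = true ↔ j' = j
      rw [haval]
      constructor
      · intro ht
        by_contra hne'
        rw [Nat.testBit_two_pow_of_ne (fun e => hne' (Fin.ext e.symm))] at ht
        simp at ht
      · rintro rfl
        exact Nat.testBit_two_pow_self
    intro j₁ j₂ hjj
    by_cases hj1 : j₁.val + 1 < k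
    · obtain ⟨i, hi⟩ := hsing j₁ hj1
      exact ⟨i, fun hf => hjj (((hi j₂).mp (hf.mp ((hi j₁).mpr rfl))).symm)⟩
    · have hj2 : j₂.val + 1 < k := by
        have e1 := j₁.2
        have e2 := j₂.2
        have e3 : j₂.val ≠ j₁.val := fun e => hjj (Fin.ext e.symm)
        omega
      obtain ⟨i, hi⟩ := hsing j₂ hj2
      exact ⟨i, fun hf => hjj ((hi j₁).mp (hf.mpr ((hi j₂).mpr rfl)))⟩
  · -- star property: column 0 meets every column inside some row
    intro j
    by_cases hj0 : j.val = 0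
    · have h0 : a 0 = 1 := by
        simp only [ha]
        rw [if_neg]
        rintro ⟨-, h⟩
        omega
      refine ⟨⟨0, by omega⟩, ?_, ?_⟩
      · show Nat.testBit (a 0) 0 = true
        rw [h0]
        decide
      · show Nat.testBit (a 0) j.val = true
        rw [hj0, h0]
        decide
    · have hjv : 1 ≤ j.val := by omega
      have hd : 2 ∣ 2 ^ j.val := dvd_pow_self 2 (by omega)
      have hd' : 2 ∣ 2 ^ (k - 1) := dvd_pow_self 2 (by omega)
      have hle : 2 ^ j.val ≤ 2 ^ (k - 1) :=
        Nat.pow_le_pow_right (by norm_num) (by have := j.2; omega)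
      have htb0 : Nat.testBit (2 ^ j.val + 1) 0 = true := by
        rw [Nat.testBit_eq_decide_div_mod_eq]
        simp only [pow_zero, Nat.div_one, decide_eq_true_eq]
        omega
      have htbj : Nat.testBit (2 ^ j.val + 1) j.val = true := by
        rw [Nat.testBit_eq_decide_div_mod_eq]
        have hdiv : (2 ^ j.val + 1) / 2 ^ j.val = 1 := by
          rw [add_comm, Nat.add_div_right _ (by positivity)]
          rw [Nat.div_eq_of_lt (Nat.one_lt_two_pow_iff.mpr (by omega))]
        rw [hdiv]
        decide
      by_cases hm : 2 ^ j.val + 1 ≤ n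
      · have haval : a (2 ^ j.val) = 2 ^ j.val + 1 := by
          simp only [ha]
          rw [if_neg]
          rintro ⟨hn1, hn2⟩
          omega
        refine ⟨⟨2 ^ j.val, by omega⟩, ?_, ?_⟩
        · show Nat.testBit (a (2 ^ j.val)) 0 = true
          rw [haval]
          exact htb0
        · show Nat.testBit (a (2 ^ j.val)) j.val = true
          rw [haval]
          exact htbj
      · have hn2 : n = 2 ^ j.val := by omega
        have hnk : n = 2 ^ (k - 1) := by omega
        have haval : a (n - 1) = 2 ^ j.val + 1 := by
          simp only [ha]
          rw [if_pos ⟨hnk, trivial⟩]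
          omega
        refine ⟨⟨n - 1, by omega⟩, ?_, ?_⟩
        · show Nat.testBit (a (n - 1)) 0 = true
          rw [haval]
          exact htb0
        · show Nat.testBit (a (n - 1)) j.val = true
          rw [haval]
          exact htbj

end PrimeConstruction

/-- for disjoint sets `S`, `S'` with `|S| ≥ 2` and `|S'| = ⌈log₂(|S|+1)⌉`,
there is a prime graph on `S ∪ S'` in which both `S` and `S'` are stable sets. -/
theorem exists_prime_graph_two_stable_sets {V : Type*} [Fintype V] (S S' : Set V)
    (hdisj : Disjoint S S') (hcover : S ∪ S' = Set.univ)
    (hS : 2 ≤ S.ncard) (hS' : S'.ncard = Nat.clog 2 (S.ncard + 1)) :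
    ∃ G : SimpleGraph V, G.IsPrimeGraph ∧ G.IsStableSet S ∧ G.IsStableSet S' := by
  classical
  have hk2 : 2 ≤ S'.ncard := by
    rw [hS']
    by_contra h
    push_neg at h
    have h2 := (Nat.clog_le_iff_le_pow (by norm_num : (1:ℕ) < 2)).mp
      (show Nat.clog 2 (S.ncard + 1) ≤ 1 by omega)
    rw [pow_one] at h2
    omega
  have hpow : S.ncard + 1 ≤ 2 ^ S'.ncard := by
    rw [hS']
    exact Nat.le_pow_clog (by norm_num) _
  have hlow : 2 ^ (S'.ncard - 1) ≤ S.ncard := by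
    have h := Nat.pow_pred_clog_lt_self (b := 2) (by norm_num) (x := S.ncard + 1) (by omega)
    rw [← hS', Nat.pred_eq_sub_one] at h
    omega
  obtain ⟨A, hA1, hA2, hA3, hA4⟩ := exists_good_A S.ncard S'.ncard hS hk2 hpow hlow
  letI : Fintype ↥S := S.toFinite.fintype
  letI : Fintype ↥S' := S'.toFinite.fintype
  have hcS : Fintype.card ↥S = S.ncard := by
    rw [← Nat.card_eq_fintype_card, Nat.card_coe_set_eq]
  have hcS' : Fintype.card ↥S' = S'.ncard := by
    rw [← Nat.card_eq_fintype_card, Nat.card_coe_set_eq]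
  let eS : ↥S ≃ Fin S.ncard := Fintype.equivFinOfCardEq hcS
  let eS' : ↥S' ≃ Fin S'.ncard := Fintype.equivFinOfCardEq hcS'
  have hmem : ∀ v : V, v ∉ S → v ∈ S' := by
    intro v hv
    have hv2 : v ∈ S ∪ S' := by rw [hcover]; trivial
    rcases hv2 with h | h
    · exact absurd h hv
    · exact h
  set f : V → Fin S.ncard ⊕ Fin S'.ncard :=
    fun v => if h : v ∈ S then Sum.inl (eS ⟨v, h⟩) else Sum.inr (eS' ⟨v, hmem v h⟩) with hfdef
  have hfS : ∀ v (h : v ∈ S), f v = Sum.inl (eS ⟨v, h⟩) := by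
    intro v h
    simp only [hfdef]
    rw [dif_pos h]
  have hfS' : ∀ v (h : v ∉ S), f v = Sum.inr (eS' ⟨v, hmem v h⟩) := by
    intro v h
    simp only [hfdef]
    rw [dif_neg h]
  have hfinj : Function.Injective f := by
    intro u v huv
    by_cases hu : u ∈ S <;> by_cases hv : v ∈ S
    · rw [hfS u hu, hfS v hv] at huv
      exact congrArg Subtype.val (eS.injective (Sum.inl.inj huv))
    · rw [hfS u hu, hfS' v hv] at huv
      exact absurd huv (by simp)
    · rw [hfS' u hu, hfS v hv] at huv
      exact absurd huv (by simp)
    · rw [hfS' u hu, hfS' v hv] at huv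
      exact congrArg Subtype.val (eS'.injective (Sum.inr.inj huv))
  have hfsurj : Function.Surjective f := by
    rintro (i | j)
    · refine ⟨(eS.symm i : ↥S), ?_⟩
      have h : ((eS.symm i : ↥S) : V) ∈ S := (eS.symm i).2
      rw [hfS _ h]
      have he : (⟨((eS.symm i : ↥S) : V), h⟩ : ↥S) = eS.symm i := Subtype.coe_eta _ _
      rw [he, Equiv.apply_symm_apply]
    · refine ⟨(eS'.symm j : ↥S'), ?_⟩
      have h : ((eS'.symm j : ↥S') : V) ∉ S := by
        intro hc
        exact Set.disjoint_left.mp hdisj hc (eS'.symm j).2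
      rw [hfS' _ h]
      have he : (⟨((eS'.symm j : ↥S') : V), hmem _ h⟩ : ↥S') = eS'.symm j := Subtype.coe_eta _ _
      rw [he, Equiv.apply_symm_apply]
  have hprime := bip_prime hS hk2 A hA1 hA2 hA3 hA4
  refine ⟨SimpleGraph.comap f (bip A), ⟨?_, ?_⟩, ?_, ?_⟩
  · -- at least 4 vertices
    have hcard : Fintype.card V = S.ncard + S'.ncard := by
      rw [Fintype.card_congr (Equiv.ofBijective f ⟨hfinj, hfsurj⟩)]
      simp
    omega
  · -- all modules are trivial
    intro M hM
    have hNmod : (bip A).IsModule (f '' M) := by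
      intro w hw
      obtain ⟨u, rfl⟩ := hfsurj w
      have hu : u ∉ M := fun h => hw ⟨u, h, rfl⟩
      rcases hM u hu with hall | hnone
      · exact Or.inl (by rintro m' ⟨m, hm, rfl⟩; exact hall m hm)
      · exact Or.inr (by rintro m' ⟨m, hm, rfl⟩; exact hnone m hm)
    rcases hprime.2 _ hNmod with h | ⟨w, h⟩ | h
    · exact Or.inl (by rwa [Set.image_eq_empty] at h)
    · refine Or.inr (Or.inl ?_)
      obtain ⟨v, hv⟩ := Set.image_nonempty.mp (h ▸ Set.singleton_nonempty w)
      refine ⟨v, ?_⟩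
      ext z
      simp only [Set.mem_singleton_iff]
      constructor
      · intro hz
        apply hfinj
        have h1 : f z ∈ f '' M := ⟨z, hz, rfl⟩
        have h2 : f v ∈ f '' M := ⟨v, hv, rfl⟩
        rw [h, Set.mem_singleton_iff] at h1 h2
        rw [h1, h2]
      · rintro rfl
        exact hv
    · refine Or.inr (Or.inr ?_)
      rw [Set.eq_univ_iff_forall]
      intro u
      have hu : f u ∈ f '' M := by rw [h]; trivial
      obtain ⟨m, hm, hme⟩ := hu
      rwa [← hfinj hme]
  · -- S is stable
    intro u hu v hv huv
    rw [SimpleGraph.compl_adj]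
    refine ⟨huv, ?_⟩
    show ¬ (bip A).Adj (f u) (f v)
    rw [hfS u hu, hfS v hv]
    exact bip_not_adj_inl_inl
  · -- S' is stable
    intro u hu v hv huv
    rw [SimpleGraph.compl_adj]
    refine ⟨huv, ?_⟩
    have hu' : u ∉ S := fun h => Set.disjoint_left.mp hdisj h hu
    have hv' : v ∉ S := fun h => Set.disjoint_left.mp hdisj h hv
    show ¬ (bip A).Adj (f u) (f v)
    rw [hfS' u hu', hfS' v hv']
    exact bip_not_adj_inr_inr
end

section
/- Let C and S' be disjoint finite sets with |C| ≥ 2 and |S'| = ⌈log₂(|C|+1)⌉. Then there exists a prime graph G on vertex set C ∪ S' such that C is a clique in G and S' is a stable set in G. -/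
/-- for disjoint sets `C`, `S'` with `|C| ≥ 2` and `|S'| = ⌈log₂(|C|+1)⌉`,
there is a prime graph on `C ∪ S'` with `C` a clique and `S'` a stable set. -/
theorem exists_prime_graph_clique_and_stable {V : Type*} [Fintype V] (C S' : Set V)
    (hdisj : Disjoint C S') (hcover : C ∪ S' = Set.univ)
    (hC : 2 ≤ C.ncard) (hS' : S'.ncard = Nat.clog 2 (C.ncard + 1)) :
    ∃ G : SimpleGraph V, G.IsPrimeGraph ∧ G.IsClique C ∧ G.IsStableSet S' := by
  classical
  set n := C.ncard with hn
  set k := S'.ncard with hk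
  set CF := C.toFinset with hCFdef
  set SF := S'.toFinset with hSFdef
  have hmemC : ∀ v, v ∈ CF ↔ v ∈ C := fun v => Set.mem_toFinset
  have hmemS : ∀ v, v ∈ SF ↔ v ∈ S' := fun v => Set.mem_toFinset
  have hCFcard : CF.card = n := (Set.ncard_eq_toFinset_card' C).symm
  have hSFcard : SF.card = k := (Set.ncard_eq_toFinset_card' S').symm
  have hCS : ∀ v, v ∈ C → v ∈ S' → False := by
    intro v h1 h2
    exact (Set.disjoint_left.1 hdisj h1) h2
  have hmemCS : ∀ v : V, v ∈ C ∨ v ∈ S' := by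
    intro v
    have : v ∈ C ∪ S' := by rw [hcover]; trivial
    exact this
  -- numeric facts
  have h2k : n + 1 ≤ 2 ^ k := by rw [hS']; exact Nat.le_pow_clog (by norm_num) _
  have hk2 : 2 ≤ k := by
    rw [hS']
    have : (2:ℕ) ^ 1 < n + 1 := by omega
    have := (Nat.lt_clog_iff_pow_lt (by norm_num)).2 this
    omega
  have hkn : k ≤ n := by
    rw [hS']
    exact (Nat.clog_le_iff_le_pow (by norm_num)).2 (Nat.lt_two_pow_self (n := n))
  -- the pool of labels: nonempty? no: all subsets of SF except SF itself
  set T := SF.powerset.erase SF with hTdef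
  have hTcard : T.card = 2 ^ k - 1 := by
    rw [hTdef, Finset.card_erase_of_mem (Finset.mem_powerset_self SF),
      Finset.card_powerset, hSFcard]
  set I := SF.image (fun s => ({s} : Finset V)) with hIdef
  have hIT : I ⊆ T := by
    intro x hx
    rw [hIdef, Finset.mem_image] at hx
    obtain ⟨s, hs, rfl⟩ := hx
    refine Finset.mem_erase.2 ⟨?_, Finset.mem_powerset.2 (Finset.singleton_subset_iff.2 hs)⟩
    intro h
    have := congrArg Finset.card h
    rw [Finset.card_singleton, hSFcard] at this
    omega
  have hIcard : I.card = k := by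
    rw [hIdef, Finset.card_image_of_injective _ (fun a b h => Finset.singleton_inj.1 h), hSFcard]
  obtain ⟨L, hIL, hLT, hLcard⟩ :=
    Finset.exists_subsuperset_card_eq (n := n) hIT (by rw [hIcard]; omega) (by rw [hTcard]; omega)
  have e : {x // x ∈ CF} ≃ {x // x ∈ L} := Finset.equivOfCardEq (by rw [hCFcard, hLcard])
  set ℓ : V → Finset V := fun v => if h : v ∈ CF then (e ⟨v, h⟩ : Finset V) else ∅ with hℓdef
  have hℓL : ∀ v (h : v ∈ CF), ℓ v ∈ L := by
    intro v h
    simp only [hℓdef, dif_pos h]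
    exact (e ⟨v, h⟩).2
  have hℓsub : ∀ v, v ∈ C → ℓ v ⊆ SF ∧ ℓ v ≠ SF := by
    intro v hv
    have h := hℓL v ((hmemC v).2 hv)
    have := Finset.mem_erase.1 (hLT h)
    exact ⟨Finset.mem_powerset.1 this.2, this.1⟩
  have hℓempty : ∀ v, v ∈ S' → ℓ v = ∅ := by
    intro v hv
    have : v ∉ CF := fun h => hCS v ((hmemC v).1 h) hv
    simp only [hℓdef, dif_neg this]
  have hℓinj : ∀ u v, u ∈ C → v ∈ C → ℓ u = ℓ v → u = v := by
    intro u v hu hv huv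
    have hu' : u ∈ CF := (hmemC u).2 hu
    have hv' : v ∈ CF := (hmemC v).2 hv
    simp only [hℓdef, dif_pos hu', dif_pos hv'] at huv
    have : e ⟨u, hu'⟩ = e ⟨v, hv'⟩ := Subtype.ext huv
    have := e.injective this
    exact congrArg Subtype.val this
  have hsingle : ∀ s, s ∈ S' → ∃ c, c ∈ C ∧ ℓ c = {s} := by
    intro s hs
    have hsI : ({s} : Finset V) ∈ L := hIL (by
      rw [hIdef, Finset.mem_image]; exact ⟨s, (hmemS s).2 hs, rfl⟩)
    refine ⟨(e.symm ⟨{s}, hsI⟩ : {x // x ∈ CF}).1, (hmemC _).1 (e.symm ⟨{s}, hsI⟩).2, ?_⟩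
    simp only [hℓdef, dif_pos (e.symm ⟨{s}, hsI⟩).2]
    rw [show (⟨(e.symm ⟨{s}, hsI⟩).1, (e.symm ⟨{s}, hsI⟩).2⟩ : {x // x ∈ CF}) = e.symm ⟨{s}, hsI⟩
      from rfl, e.apply_symm_apply]
  -- graph
  set G : SimpleGraph V := {
    Adj := fun u v => u ≠ v ∧ ((u ∈ C ∧ v ∈ C) ∨ v ∈ ℓ u ∨ u ∈ ℓ v),
    symm := by
      constructor
      rintro u v ⟨h1, h2⟩
      refine ⟨h1.symm, ?_⟩
      tauto,
    loopless := ⟨fun v h => h.1 rfl⟩ } with hGdef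
  have hadjCC : ∀ u v, u ∈ C → v ∈ C → u ≠ v → G.Adj u v := by
    intro u v hu hv huv
    exact ⟨huv, Or.inl ⟨hu, hv⟩⟩
  have hadjSS : ∀ u v, u ∈ S' → v ∈ S' → ¬ G.Adj u v := by
    rintro u v hu hv ⟨h1, h2⟩
    rcases h2 with ⟨hu', _⟩ | h | h
    · exact hCS u hu' hu
    · rw [hℓempty u hu] at h; exact absurd h (Finset.notMem_empty v)
    · rw [hℓempty v hv] at h; exact absurd h (Finset.notMem_empty u)
  have hadjCS : ∀ c s, c ∈ C → s ∈ S' → (G.Adj c s ↔ s ∈ ℓ c) := by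
    intro c s hc hs
    constructor
    · rintro ⟨h1, h2⟩
      rcases h2 with ⟨_, hs'⟩ | h | h
      · exact absurd hs' (fun h => hCS s h hs)
      · exact h
      · rw [hℓempty s hs] at h; exact absurd h (Finset.notMem_empty c)
    · intro h
      exact ⟨fun he => hCS c hc (he ▸ hs), Or.inr (Or.inl h)⟩
  refine ⟨G, ⟨?_, ?_⟩, ?_, ?_⟩
  · -- card ≥ 4
    have h1 : Fintype.card V = (Set.univ : Set V).ncard := by
      rw [Set.ncard_univ, Nat.card_eq_fintype_card]
    have h2 : (Set.univ : Set V).ncard = n + k := by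
      rw [← hcover, Set.ncard_union_eq hdisj (Set.toFinite C) (Set.toFinite S')]
    omega
  · -- modules
    intro M hM
    by_cases h0 : M = ∅
    · exact Or.inl h0
    by_cases h1 : ∃ v, M = {v}
    · exact Or.inr (Or.inl h1)
    right; right
    -- two distinct elements
    obtain ⟨a, ha⟩ := Set.nonempty_iff_ne_empty.2 h0
    have hab : ∃ b ∈ M, b ≠ a := by
      by_contra hc
      push_neg at hc
      exact h1 ⟨a, Set.eq_singleton_iff_unique_mem.2 ⟨ha, hc⟩⟩
    obtain ⟨b, hb, hba⟩ := hab
    -- Step A : some clique vertex in M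
    have hA : ∃ c ∈ M, c ∈ C := by
      rcases hmemCS a with h | haS
      · exact ⟨a, ha, h⟩
      rcases hmemCS b with h | hbS
      · exact ⟨b, hb, h⟩
      obtain ⟨c, hcC, hcl⟩ := hsingle a haS
      refine ⟨c, ?_, hcC⟩
      by_contra hcM
      rcases hM c hcM with hall | hnone
      · refine hadjSS b a hbS haS ?_
        have := hall b hb
        rcases this.2 with ⟨_, hbC⟩ | h | h
        · exact absurd hbC (fun h => hCS b h hbS)
        · rw [hcl, Finset.mem_singleton] at h; exact absurd h hba
        · rw [hℓempty b hbS] at h; exact absurd h (Finset.notMem_empty c)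
      · exact hnone a ha ((hadjCS c a hcC haS).2 (by rw [hcl]; exact Finset.mem_singleton_self a))
    -- Step B : some stable vertex in M
    have hB : ∃ s ∈ M, s ∈ S' := by
      rcases hmemCS a with haC | h
      swap
      · exact ⟨a, ha, h⟩
      rcases hmemCS b with hbC | h
      swap
      · exact ⟨b, hb, h⟩
      have hne : ℓ a ≠ ℓ b := fun h => hba (hℓinj b a hbC haC h.symm)
      have : ∃ s, (s ∈ ℓ a ∧ s ∉ ℓ b) ∨ (s ∈ ℓ b ∧ s ∉ ℓ a) := by
        by_contra hc
        push_neg at hc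
        refine hne (Finset.ext fun s => ?_)
        have := hc s
        tauto
      obtain ⟨s, hs⟩ := this
      have hsS : s ∈ S' := by
        rcases hs with ⟨h, _⟩ | ⟨h, _⟩
        · exact (hmemS s).1 ((hℓsub a haC).1 h)
        · exact (hmemS s).1 ((hℓsub b hbC).1 h)
      refine ⟨s, ?_, hsS⟩
      by_contra hsM
      rcases hM s hsM with hall | hnone
      · rcases hs with ⟨_, h2⟩ | ⟨_, h2⟩
        · exact h2 ((hadjCS b s hbC hsS).1 ((hall b hb).symm))
        · exact h2 ((hadjCS a s haC hsS).1 ((hall a ha).symm))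
      · rcases hs with ⟨h2, _⟩ | ⟨h2, _⟩
        · exact hnone a ha (((hadjCS a s haC hsS).2 h2).symm)
        · exact hnone b hb (((hadjCS b s hbC hsS).2 h2).symm)
    obtain ⟨c, hcM, hcC⟩ := hA
    obtain ⟨s, hsM, hsS⟩ := hB
    -- Claim 1 : S' ⊆ M
    have claim1 : ∀ q, q ∈ S' → q ∈ M := by
      intro q hqS
      by_contra hqM
      have hqs : q ≠ s := fun h => hqM (h ▸ hsM)
      have hnone : ∀ m ∈ M, ¬ G.Adj q m := by
        rcases hM q hqM with hall | hnone
        · exact absurd (hall s hsM) (hadjSS q s hqS hsS)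
        · exact hnone
      obtain ⟨c', hc'C, hc'l⟩ := hsingle q hqS
      have hc'M : c' ∉ M := by
        intro h
        exact hnone c' h (((hadjCS c' q hc'C hqS).2 (by
          rw [hc'l]; exact Finset.mem_singleton_self q)).symm)
      rcases hM c' hc'M with hall | hnone'
      · have := (hadjCS c' s hc'C hsS).1 (hall s hsM)
        rw [hc'l, Finset.mem_singleton] at this
        exact hqM (this ▸ hsM)
      · refine hnone' c hcM (hadjCC c' c hc'C hcC ?_)
        intro h
        exact hc'M (h ▸ hcM)
    -- Claim 2 : C ⊆ M
    have claim2 : ∀ v, v ∈ C → v ∈ M := by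
      intro v hvC
      by_contra hvM
      have hall : ∀ m ∈ M, G.Adj v m := by
        rcases hM v hvM with hall | hnone
        · exact hall
        · exact absurd (hadjCC v c hvC hcC (fun h => hvM (h ▸ hcM))) (hnone c hcM)
      obtain ⟨hsub, hne⟩ := hℓsub v hvC
      obtain ⟨q, hqSF, hql⟩ := Finset.exists_of_ssubset (lt_of_le_of_ne hsub hne)
      have hqS : q ∈ S' := (hmemS q).1 hqSF
      exact hql ((hadjCS v q hvC hqS).1 (hall q (claim1 q hqS)))
    ext v
    simp only [Set.mem_univ, iff_true]
    rcases hmemCS v with h | h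
    · exact claim2 v h
    · exact claim1 v h
  · -- clique
    intro u hu v hv huv
    exact hadjCC u v hu hv huv
  · -- stable set
    intro u hu v hv huv
    rw [SimpleGraph.compl_adj]
    exact ⟨huv, hadjSS u v hu hv⟩
end

section
/- Let G be a prime graph and a ∉ V(G). An extension H of G to V(G) ∪ {a} (i.e., H[V(G)] = G) fails to be prime if and only if the neighbourhood of a in H equals ∅, V(G), N_G(v), or N_G(v) ∪ {v} for some vertex v of G. Consequently, there exist exactly 2^{|V(G)|} − 2|V(G)| − 2 prime extensions of G to V(G) ∪ {a}. -/
set_option linter.unusedSectionVars false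


section Aux

open SimpleGraph

variable {V : Type*} [Fintype V] [DecidableEq V]

/-- The one-vertex extension of `G` determined by the neighbourhood `S` of the new vertex. -/
def OneVertExt.extGraph (G : SimpleGraph V) (S : Set V) : SimpleGraph (V ⊕ Unit) where
  Adj x y :=
    match x, y with
    | Sum.inl u, Sum.inl v => G.Adj u v
    | Sum.inl u, Sum.inr _ => u ∈ S
    | Sum.inr _, Sum.inl v => v ∈ S
    | Sum.inr _, Sum.inr _ => False
  symm := by constructor; rintro (u | u) (v | v) h <;> first | exact h.symm | exact h
  loopless := by constructor; rintro (u | u) h <;> first | exact G.loopless.irrefl u h | exact h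

lemma OneVertExt.extGraph_isExtension (G : SimpleGraph V) (S : Set V) :
    G.IsExtension (OneVertExt.extGraph G S) := fun _ _ => Iff.rfl

lemma OneVertExt.isExtension_eq (G : SimpleGraph V) {H : SimpleGraph (V ⊕ Unit)}
    (hH : G.IsExtension H) :
    H = OneVertExt.extGraph G {v | H.Adj (Sum.inl v) (Sum.inr ())} := by
  ext x y
  rcases x with u | u <;> rcases y with v | v
  · exact hH u v
  · cases v; exact Iff.rfl
  · cases u
    exact ⟨fun h => h.symm, fun h => Adj.symm (show H.Adj (Sum.inl v) (Sum.inr ()) from h)⟩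
  · cases u; cases v; exact ⟨fun h => H.loopless.irrefl _ h, False.elim⟩

lemma OneVertExt.exists_not_mem_pair (h4 : 4 ≤ Fintype.card V) (v w : V) :
    ∃ z, z ≠ v ∧ z ≠ w := by
  by_contra h
  push_neg at h
  have hsub : (Finset.univ : Finset V) ⊆ {v, w} := by
    intro z _
    by_cases hz : z = v
    · simp [hz]
    · simp [h z hz]
  have h2 : Fintype.card V ≤ ({v, w} : Finset V).card := by
    rw [← Finset.card_univ]; exact Finset.card_le_card hsub
  have h3 : ({v, w} : Finset V).card ≤ 2 :=
    (Finset.card_insert_le _ _).trans (by simp)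
  omega

lemma OneVertExt.exists_second (h4 : 4 ≤ Fintype.card V) (v : V) : ∃ w, w ≠ v := by
  have : Nontrivial V := Fintype.one_lt_card_iff_nontrivial.mp (by omega)
  exact exists_ne v

lemma OneVertExt.pair_not_module {G : SimpleGraph V} (hG : G.IsPrimeGraph) {v w : V}
    (hvw : v ≠ w) : ¬ G.IsModule {v, w} := by
  intro hM
  rcases hG.2 _ hM with h | ⟨x, h⟩ | h
  · exact absurd h ((Set.insert_nonempty _ _).ne_empty)
  · have hv : v = x := by
      have : v ∈ ({v, w} : Set V) := Set.mem_insert _ _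
      rw [h] at this; exact this
    have hw : w = x := by
      have : w ∈ ({v, w} : Set V) := by simp
      rw [h] at this; exact this
    exact hvw (hv.trans hw.symm)
  · obtain ⟨z, hz1, hz2⟩ := OneVertExt.exists_not_mem_pair hG.1 v w
    have : z ∈ ({v, w} : Set V) := h ▸ Set.mem_univ z
    rcases this with rfl | rfl
    · exact hz1 rfl
    · exact hz2 rfl

lemma OneVertExt.compl_singleton_not_module {G : SimpleGraph V} (hG : G.IsPrimeGraph)
    (v : V) : ¬ G.IsModule {v}ᶜ := by
  intro hM
  rcases hG.2 _ hM with h | ⟨x, h⟩ | h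
  · obtain ⟨w, hw⟩ := OneVertExt.exists_second hG.1 v
    have : w ∈ ({v}ᶜ : Set V) := by simpa using hw
    rw [h] at this; exact this
  · obtain ⟨z, hz1, hz2⟩ := OneVertExt.exists_not_mem_pair hG.1 v x
    have : z ∈ ({v}ᶜ : Set V) := by simpa using hz1
    rw [h] at this
    exact hz2 this
  · have : v ∈ ({v}ᶜ : Set V) := h ▸ Set.mem_univ v
    exact this rfl

lemma OneVertExt.exists_adj {G : SimpleGraph V} (hG : G.IsPrimeGraph) (v : V) :
    ∃ w, G.Adj v w := by
  by_contra h
  push_neg at h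
  apply OneVertExt.compl_singleton_not_module hG v
  intro u hu
  have huv : u = v := by simpa using hu
  subst huv
  exact Or.inr fun m _ => h m

lemma OneVertExt.exists_not_adj {G : SimpleGraph V} (hG : G.IsPrimeGraph) (v : V) :
    ∃ w, w ≠ v ∧ ¬ G.Adj v w := by
  by_contra h
  push_neg at h
  apply OneVertExt.compl_singleton_not_module hG v
  intro u hu
  have huv : u = v := by simpa using hu
  subst huv
  exact Or.inl fun m hm => h m (by simpa using hm)

lemma OneVertExt.neighborSet_injective {G : SimpleGraph V} (hG : G.IsPrimeGraph) :
    Function.Injective G.neighborSet := by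
  intro v w h
  by_contra hvw
  apply OneVertExt.pair_not_module hG hvw
  intro z hz
  have hzv : z ≠ v := fun hh => hz (by simp [hh])
  have hzw : z ≠ w := fun hh => hz (by simp [hh])
  have key : G.Adj z v ↔ G.Adj z w := by
    constructor
    · intro ha
      have : z ∈ G.neighborSet v := ha.symm
      rw [h] at this
      exact this.symm
    · intro ha
      have : z ∈ G.neighborSet w := ha.symm
      rw [← h] at this
      exact this.symm
  by_cases ha : G.Adj z v
  · left
    intro m hm
    rcases hm with rfl | hm
    · exact ha
    · rw [Set.mem_singleton_iff] at hm; subst hm; exact key.mp ha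
  · right
    intro m hm
    rcases hm with rfl | hm
    · exact ha
    · rw [Set.mem_singleton_iff] at hm; subst hm; exact fun hh => ha (key.mpr hh)

lemma OneVertExt.closedNeighborSet_injective {G : SimpleGraph V} (hG : G.IsPrimeGraph) :
    Function.Injective (fun v => G.neighborSet v ∪ {v}) := by
  intro v w h
  simp only at h
  by_contra hvw
  apply OneVertExt.pair_not_module hG hvw
  intro z hz
  have hzv : z ≠ v := fun hh => hz (by simp [hh])
  have hzw : z ≠ w := fun hh => hz (by simp [hh])
  have key : G.Adj z v ↔ G.Adj z w := by
    constructor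
    · intro ha
      have h1 : z ∈ G.neighborSet v ∪ {v} := Or.inl ha.symm
      rw [h] at h1
      rcases h1 with h1 | h1
      · exact h1.symm
      · exact absurd h1 hzw
    · intro ha
      have h1 : z ∈ G.neighborSet w ∪ {w} := Or.inl ha.symm
      rw [← h] at h1
      rcases h1 with h1 | h1
      · exact h1.symm
      · exact absurd h1 hzv
  by_cases ha : G.Adj z v
  · left
    intro m hm
    rcases hm with rfl | hm
    · exact ha
    · rw [Set.mem_singleton_iff] at hm; subst hm; exact key.mp ha
  · right
    intro m hm
    rcases hm with rfl | hm
    · exact ha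
    · rw [Set.mem_singleton_iff] at hm; subst hm; exact fun hh => ha (key.mpr hh)

lemma OneVertExt.neighborSet_ne_closed {G : SimpleGraph V} (v w : V) :
    G.neighborSet v ≠ G.neighborSet w ∪ {w} := by
  intro h
  have hw : G.Adj v w := by
    have : w ∈ G.neighborSet v := by rw [h]; exact Set.mem_union_right _ rfl
    exact this
  have hv : v ∈ G.neighborSet w ∪ {w} := Or.inl hw.symm
  rw [← h] at hv
  exact G.loopless.irrefl v hv

/-- If the extra vertex has (up to itself) the same neighbourhood as `inl v`, then
`{inl v, inr ()}` is a nontrivial module and `H` is not prime. -/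
lemma OneVertExt.not_prime_of {G : SimpleGraph V} (hG : G.IsPrimeGraph)
    {H : SimpleGraph (V ⊕ Unit)} (hH : G.IsExtension H) (v : V)
    (hv : ∀ w, w ≠ v → (H.Adj (Sum.inl w) (Sum.inr ()) ↔ G.Adj v w)) :
    ¬ H.IsPrimeGraph := by
  intro hp
  have hM : H.IsModule {Sum.inl v, Sum.inr ()} := by
    rintro (u | u) hu
    · have huv : u ≠ v := fun hh => hu (by simp [hh])
      by_cases ha : G.Adj u v
      · left
        intro m hm
        rcases hm with rfl | hm
        · exact (hH u v).mpr ha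
        · rw [Set.mem_singleton_iff] at hm; subst hm
          exact (hv u huv).mpr ha.symm
      · right
        intro m hm
        rcases hm with rfl | hm
        · exact fun hh => ha ((hH u v).mp hh)
        · rw [Set.mem_singleton_iff] at hm; subst hm
          exact fun hh => ha ((hv u huv).mp hh).symm
    · cases u
      exact absurd (show Sum.inr () ∈ ({Sum.inl v, Sum.inr ()} : Set (V ⊕ Unit)) by simp) hu
  rcases hp.2 _ hM with h | ⟨x, h⟩ | h
  · exact absurd h ((Set.insert_nonempty _ _).ne_empty)
  · have h1 : Sum.inl v = x := by
      have : (Sum.inl v : V ⊕ Unit) ∈ ({Sum.inl v, Sum.inr ()} : Set (V ⊕ Unit)) :=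
        Set.mem_insert _ _
      rw [h] at this; exact this
    have h2 : Sum.inr () = x := by
      have : (Sum.inr () : V ⊕ Unit) ∈ ({Sum.inl v, Sum.inr ()} : Set (V ⊕ Unit)) := by simp
      rw [h] at this; exact this
    exact Sum.inl_ne_inr (h1.trans h2.symm)
  · obtain ⟨w, hw⟩ := OneVertExt.exists_second hG.1 v
    have : Sum.inl w ∈ ({Sum.inl v, Sum.inr ()} : Set (V ⊕ Unit)) := h ▸ Set.mem_univ _
    rcases this with h1 | h1
    · exact hw (Sum.inl.inj h1)
    · exact Sum.inl_ne_inr (Set.mem_singleton_iff.mp h1)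

/-- If `Set.range Sum.inl` is a module of `H`, then `H` is not prime. -/
lemma OneVertExt.not_prime_range {G : SimpleGraph V} (hG : G.IsPrimeGraph)
    {H : SimpleGraph (V ⊕ Unit)}
    (hM : H.IsModule (Set.range Sum.inl)) : ¬ H.IsPrimeGraph := by
  intro hp
  rcases hp.2 _ hM with h | ⟨x, h⟩ | h
  · obtain ⟨v⟩ : Nonempty V := Fintype.card_pos_iff.mp (by have := hG.1; omega)
    have hv : (Sum.inl v : V ⊕ Unit) ∈ Set.range Sum.inl := ⟨v, rfl⟩
    rw [h] at hv; exact hv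
  · have hnt : Nontrivial V := Fintype.one_lt_card_iff_nontrivial.mp (by have := hG.1; omega)
    obtain ⟨v, w, hvw⟩ := hnt
    have hv : (Sum.inl v : V ⊕ Unit) ∈ Set.range Sum.inl := ⟨v, rfl⟩
    have hw : (Sum.inl w : V ⊕ Unit) ∈ Set.range Sum.inl := ⟨w, rfl⟩
    rw [h] at hv hw
    exact hvw (Sum.inl.inj
      ((Set.mem_singleton_iff.mp hv).trans (Set.mem_singleton_iff.mp hw).symm))
  · have hr : (Sum.inr () : V ⊕ Unit) ∈ Set.range Sum.inl := h ▸ Set.mem_univ _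
    obtain ⟨w, hw⟩ := hr
    exact Sum.inl_ne_inr hw

/-- Characterization of non-primality of one-vertex extensions of a prime graph. -/
lemma OneVertExt.char {G : SimpleGraph V} (hG : G.IsPrimeGraph)
    {H : SimpleGraph (V ⊕ Unit)} (hH : G.IsExtension H) :
    ¬ H.IsPrimeGraph ↔
      {v : V | H.Adj (Sum.inl v) (Sum.inr ())} = ∅ ∨
      {v : V | H.Adj (Sum.inl v) (Sum.inr ())} = Set.univ ∨
      (∃ v : V, {w : V | H.Adj (Sum.inl w) (Sum.inr ())} = G.neighborSet v) ∨
      (∃ v : V, {w : V | H.Adj (Sum.inl w) (Sum.inr ())} = G.neighborSet v ∪ {v}) := by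
  constructor
  · intro hnp
    have hc : 4 ≤ Fintype.card (V ⊕ Unit) := by
      have := hG.1
      simp only [Fintype.card_sum, Fintype.card_unit]
      omega
    rw [SimpleGraph.IsPrimeGraph] at hnp
    push_neg at hnp
    obtain ⟨M, hM, hne, hns, hnu⟩ := hnp hc
    set M' : Set V := {v | Sum.inl v ∈ M} with hM'def
    have hM' : G.IsModule M' := by
      intro v hv
      rcases hM (Sum.inl v) hv with h | h
      · left; intro m hm; exact (hH v m).mp (h (Sum.inl m) hm)
      · right; intro m hm hadj; exact h (Sum.inl m) hm ((hH v m).mpr hadj)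
    by_cases hr : Sum.inr () ∈ M
    · rcases hG.2 M' hM' with h | ⟨x, h⟩ | h
      · exfalso
        apply hns (Sum.inr ())
        ext y
        rcases y with u | u
        · simp only [Set.mem_singleton_iff]
          constructor
          · intro hu
            have : u ∈ M' := hu
            rw [h] at this
            exact absurd this (Set.notMem_empty u)
          · intro hh; exact (Sum.inl_ne_inr hh).elim
        · cases u
          simp only [Set.mem_singleton_iff]
          exact ⟨fun _ => trivial, fun _ => hr⟩
      · -- the main case: M = {inl x, inr ()}
        have hM2 : M = {Sum.inl x, Sum.inr ()} := by
          ext y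
          rcases y with u | u
          · constructor
            · intro hu
              have : u ∈ M' := hu
              rw [h] at this
              rw [Set.mem_singleton_iff] at this
              subst this
              exact Set.mem_insert _ _
            · intro hu
              rcases hu with h1 | h1
              · have : u = x := Sum.inl.inj h1
                subst this
                have : u ∈ M' := by rw [h]; rfl
                exact this
              · exact (Sum.inl_ne_inr (Set.mem_singleton_iff.mp h1)).elim
          · cases u
            constructor
            · intro _; exact Set.mem_insert_iff.mpr (Or.inr rfl)
            · intro _; exact hr
        have key : ∀ w, w ≠ x → (H.Adj (Sum.inl w) (Sum.inr ()) ↔ G.Adj x w) := by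
          intro w hw
          have hwM : Sum.inl w ∉ M := by
            rw [hM2]
            intro hmem
            rcases hmem with h1 | h1
            · exact hw (Sum.inl.inj h1)
            · exact Sum.inl_ne_inr (Set.mem_singleton_iff.mp h1)
          have hx1 : Sum.inl x ∈ M := by rw [hM2]; exact Set.mem_insert _ _
          have hx2 : Sum.inr () ∈ M := hr
          rcases hM _ hwM with ha | ha
          · exact iff_of_true (ha _ hx2) ((hH w x).mp (ha _ hx1)).symm
          · exact iff_of_false (ha _ hx2) fun hh => ha _ hx1 ((hH w x).mpr hh.symm)
        by_cases hx : H.Adj (Sum.inl x) (Sum.inr ())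
        · right; right; right
          refine ⟨x, ?_⟩
          ext w
          by_cases hw : w = x
          · subst hw
            simp only [Set.mem_setOf_eq, Set.mem_union, Set.mem_singleton_iff]
            exact iff_of_true hx (Or.inr trivial)
          · simp only [Set.mem_setOf_eq, Set.mem_union, Set.mem_singleton_iff,
              SimpleGraph.mem_neighborSet]
            rw [key w hw]
            exact ⟨fun hh => Or.inl hh, fun hh => hh.elim id fun h1 => absurd h1 hw⟩
        · right; right; left
          refine ⟨x, ?_⟩
          ext w
          by_cases hw : w = x
          · subst hw
            simp only [Set.mem_setOf_eq, SimpleGraph.mem_neighborSet]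
            exact iff_of_false hx (G.loopless.irrefl w)
          · simp only [Set.mem_setOf_eq, SimpleGraph.mem_neighborSet]
            exact key w hw
      · exfalso
        apply hnu
        ext y
        simp only [Set.mem_univ, iff_true]
        rcases y with u | u
        · have : u ∈ M' := by rw [h]; trivial
          exact this
        · cases u; exact hr
    · rcases hG.2 M' hM' with h | ⟨x, h⟩ | h
      · exfalso
        obtain ⟨y, hy⟩ := hne
        rcases y with u | u
        · have : u ∈ M' := hy
          rw [h] at this
          exact this
        · cases u; exact hr hy
      · exfalso
        apply hns (Sum.inl x)
        ext y
        rcases y with u | u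
        · simp only [Set.mem_singleton_iff]
          constructor
          · intro hu
            have : u ∈ M' := hu
            rw [h] at this
            rw [Set.mem_singleton_iff] at this
            subst this; rfl
          · intro hh
            have : u = x := Sum.inl.inj hh
            subst this
            have : u ∈ M' := by rw [h]; rfl
            exact this
        · cases u
          simp only [Set.mem_singleton_iff]
          exact ⟨fun hu => absurd hu hr, fun hh => (Sum.inr_ne_inl hh).elim⟩
      · rcases hM (Sum.inr ()) hr with ha | ha
        · right; left
          ext w
          simp only [Set.mem_setOf_eq, Set.mem_univ, iff_true]
          have hw : Sum.inl w ∈ M := by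
            have : w ∈ M' := by rw [h]; trivial
            exact this
          exact (ha _ hw).symm
        · left
          ext w
          simp only [Set.mem_setOf_eq, Set.mem_empty_iff_false, iff_false]
          intro hadj
          have hw : Sum.inl w ∈ M := by
            have : w ∈ M' := by rw [h]; trivial
            exact this
          exact ha _ hw hadj.symm
  · rintro (h | h | ⟨v, h⟩ | ⟨v, h⟩)
    · apply OneVertExt.not_prime_range hG
      rintro (u | u) hu
      · exact absurd ⟨u, rfl⟩ hu
      · cases u
        right
        rintro m ⟨w, rfl⟩ hadj
        have : w ∈ {v : V | H.Adj (Sum.inl v) (Sum.inr ())} := hadj.symm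
        rw [h] at this
        exact this
    · apply OneVertExt.not_prime_range hG
      rintro (u | u) hu
      · exact absurd ⟨u, rfl⟩ hu
      · cases u
        left
        rintro m ⟨w, rfl⟩
        have : w ∈ {v : V | H.Adj (Sum.inl v) (Sum.inr ())} := by rw [h]; trivial
        exact Adj.symm this
    · apply OneVertExt.not_prime_of hG hH v
      intro w hw
      have := Set.ext_iff.mp h w
      simp only [Set.mem_setOf_eq, SimpleGraph.mem_neighborSet] at this
      exact this
    · apply OneVertExt.not_prime_of hG hH v
      intro w hw
      have := Set.ext_iff.mp h w
      simp only [Set.mem_setOf_eq, Set.mem_union, Set.mem_singleton_iff,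
        SimpleGraph.mem_neighborSet] at this
      rw [this]
      exact ⟨fun hh => hh.elim id fun h1 => absurd h1 hw, fun hh => Or.inl hh⟩

end Aux

/-- characterization of the non-prime one-vertex extensions of a prime graph,
and the count `2^{|V(G)|} - 2|V(G)| - 2` of prime one-vertex extensions. -/
theorem one_vertex_prime_extensions {V : Type*} [Fintype V] [DecidableEq V]
    (G : SimpleGraph V) (hG : G.IsPrimeGraph) :
    (∀ H : SimpleGraph (V ⊕ Unit), G.IsExtension H →
      (¬ H.IsPrimeGraph ↔
        {v : V | H.Adj (Sum.inl v) (Sum.inr ())} = ∅ ∨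
        {v : V | H.Adj (Sum.inl v) (Sum.inr ())} = Set.univ ∨
        (∃ v : V, {w : V | H.Adj (Sum.inl w) (Sum.inr ())} = G.neighborSet v) ∨
        (∃ v : V, {w : V | H.Adj (Sum.inl w) (Sum.inr ())} = G.neighborSet v ∪ {v}))) ∧
    {H : SimpleGraph (V ⊕ Unit) | G.IsExtension H ∧ H.IsPrimeGraph}.ncard =
      2 ^ Fintype.card V - 2 * Fintype.card V - 2 := by
  classical
  refine ⟨fun H hH => OneVertExt.char hG hH, ?_⟩
  have h4 := hG.1
  have hnV : Nonempty V := Fintype.card_pos_iff.mp (by omega)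
  set Bad : Set (Set V) :=
    insert ∅ (insert Set.univ
      (Set.range G.neighborSet ∪ Set.range fun v => G.neighborSet v ∪ {v})) with hBad
  have hmemBad : ∀ S : Set V, S ∈ Bad ↔
      (S = ∅ ∨ S = Set.univ ∨ (∃ v, S = G.neighborSet v) ∨
        (∃ v, S = G.neighborSet v ∪ {v})) := by
    intro S
    simp only [hBad, Set.mem_insert_iff, Set.mem_union, Set.mem_range]
    constructor
    · rintro (h | h | ⟨v, hv⟩ | ⟨v, hv⟩)
      exacts [Or.inl h, Or.inr (Or.inl h), Or.inr (Or.inr (Or.inl ⟨v, hv.symm⟩)),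
        Or.inr (Or.inr (Or.inr ⟨v, hv.symm⟩))]
    · rintro (h | h | ⟨v, hv⟩ | ⟨v, hv⟩)
      exacts [Or.inl h, Or.inr (Or.inl h), Or.inr (Or.inr (Or.inl ⟨v, hv.symm⟩)),
        Or.inr (Or.inr (Or.inr ⟨v, hv.symm⟩))]
  have hSgraph : ∀ S : Set V,
      {v : V | (OneVertExt.extGraph G S).Adj (Sum.inl v) (Sum.inr ())} = S :=
    fun S => Set.setOf_mem_eq
  have hprimeS : ∀ S : Set V, (OneVertExt.extGraph G S).IsPrimeGraph ↔ S ∉ Bad := by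
    intro S
    rw [hmemBad]
    have hch := OneVertExt.char hG (OneVertExt.extGraph_isExtension G S)
    rw [hSgraph S] at hch
    constructor
    · intro hp hb
      exact hch.mpr hb hp
    · intro hb
      by_contra hp
      exact hb (hch.mp hp)
  have himg : (fun H : SimpleGraph (V ⊕ Unit) => {v : V | H.Adj (Sum.inl v) (Sum.inr ())}) ''
      {H : SimpleGraph (V ⊕ Unit) | G.IsExtension H ∧ H.IsPrimeGraph} = Badᶜ := by
    ext S
    constructor
    · rintro ⟨H, ⟨hext, hp⟩, rfl⟩
      intro hb
      exact (OneVertExt.char hG hext).mpr ((hmemBad _).mp hb) hp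
    · intro hS
      exact ⟨OneVertExt.extGraph G S,
        ⟨OneVertExt.extGraph_isExtension G S, (hprimeS S).mpr hS⟩, hSgraph S⟩
  have hinj : Set.InjOn
      (fun H : SimpleGraph (V ⊕ Unit) => {v : V | H.Adj (Sum.inl v) (Sum.inr ())})
      {H : SimpleGraph (V ⊕ Unit) | G.IsExtension H ∧ H.IsPrimeGraph} := by
    intro H1 h1 H2 h2 hEq
    rw [OneVertExt.isExtension_eq G h1.1, OneVertExt.isExtension_eq G h2.1]
    simp only at hEq
    rw [hEq]
  have hNne : ∀ v, G.neighborSet v ≠ ∅ := by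
    intro v hh
    obtain ⟨w, hw⟩ := OneVertExt.exists_adj hG v
    have : w ∈ G.neighborSet v := hw
    rw [hh] at this
    exact this
  have hN'univ : ∀ v, G.neighborSet v ∪ {v} ≠ Set.univ := by
    intro v hh
    obtain ⟨w, hw1, hw2⟩ := OneVertExt.exists_not_adj hG v
    have : w ∈ G.neighborSet v ∪ {v} := hh ▸ Set.mem_univ w
    rcases this with h1 | h1
    · exact hw2 h1
    · exact hw1 h1
  have hsplit : (Set.range G.neighborSet ∪ Set.range fun v => G.neighborSet v ∪ {v}).ncard
      = 2 * Fintype.card V := by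
    rw [Set.ncard_union_eq (by
      rw [Set.disjoint_left]
      rintro _ ⟨v, rfl⟩ ⟨w, hw⟩
      exact OneVertExt.neighborSet_ne_closed v w hw.symm)]
    rw [← Set.image_univ, ← Set.image_univ,
      Set.ncard_image_of_injective _ (OneVertExt.neighborSet_injective hG),
      Set.ncard_image_of_injective _ (OneVertExt.closedNeighborSet_injective hG),
      Set.ncard_univ, Nat.card_eq_fintype_card]
    ring
  have h1 : Set.univ ∉
      (Set.range G.neighborSet ∪ Set.range fun v => G.neighborSet v ∪ {v}) := by
    rintro (⟨v, hv⟩ | ⟨v, hv⟩)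
    · have : v ∈ G.neighborSet v := hv ▸ Set.mem_univ v
      exact G.loopless.irrefl v this
    · exact hN'univ v hv
  have h0 : (∅ : Set V) ∉ insert Set.univ
      (Set.range G.neighborSet ∪ Set.range fun v => G.neighborSet v ∪ {v}) := by
    simp only [Set.mem_insert_iff, Set.mem_union, Set.mem_range]
    push_neg
    refine ⟨Set.univ_nonempty, fun v => Set.nonempty_iff_ne_empty.mpr (hNne v),
      fun v => ⟨v, Set.mem_union_right _ rfl⟩⟩
  have hBadcard : Bad.ncard = 2 * Fintype.card V + 2 := by
    rw [hBad, Set.ncard_insert_of_notMem h0, Set.ncard_insert_of_notMem h1, hsplit]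
  calc {H : SimpleGraph (V ⊕ Unit) | G.IsExtension H ∧ H.IsPrimeGraph}.ncard
      = ((fun H : SimpleGraph (V ⊕ Unit) => {v : V | H.Adj (Sum.inl v) (Sum.inr ())}) ''
          {H : SimpleGraph (V ⊕ Unit) | G.IsExtension H ∧ H.IsPrimeGraph}).ncard :=
        (Set.ncard_image_of_injOn hinj).symm
    _ = (Badᶜ).ncard := by rw [himg]
    _ = 2 ^ Fintype.card V - 2 * Fintype.card V - 2 := by
        rw [Set.compl_eq_univ_diff, Set.ncard_diff (Set.subset_univ _), Set.ncard_univ,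
          Nat.card_eq_fintype_card, Fintype.card_set, hBadcard]
        omega
end

section
/- Let G be a prime graph and a, b two distinct vertices not in V(G). Then there exists a prime extension H of G to V(G) ∪ {a, b} in which a and b are non-adjacent. -/
def SimpleGraph.twoExt {V : Type*} (G : SimpleGraph V) (u : V) : SimpleGraph (V ⊕ Bool) where
  Adj x y := match x, y with
    | .inl v, .inl w => G.Adj v w
    | .inl v, .inr t => match t with | true => v ≠ u | false => v = u
    | .inr t, .inl v => match t with | true => v ≠ u | false => v = u
    | .inr _, .inr _ => False
  symm := by
    constructor
    rintro (v | t) (w | s) h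
    · exact h.symm
    · exact h
    · exact h
    · exact h
  loopless := by
    constructor
    rintro (v | t) h
    · exact G.irrefl h
    · exact h

namespace SimpleGraph

variable {V : Type*} (G : SimpleGraph V) (u v w : V)

@[simp] lemma twoExt_adj_inl_inl : (G.twoExt u).Adj (.inl v) (.inl w) ↔ G.Adj v w := Iff.rfl
@[simp] lemma twoExt_adj_inl_inr_true : (G.twoExt u).Adj (.inl v) (.inr true) ↔ v ≠ u := Iff.rfl
@[simp] lemma twoExt_adj_inl_inr_false : (G.twoExt u).Adj (.inl v) (.inr false) ↔ v = u := Iff.rfl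
@[simp] lemma twoExt_adj_inr_true_inl : (G.twoExt u).Adj (.inr true) (.inl v) ↔ v ≠ u := Iff.rfl
@[simp] lemma twoExt_adj_inr_false_inl : (G.twoExt u).Adj (.inr false) (.inl v) ↔ v = u := Iff.rfl
@[simp] lemma twoExt_adj_inr_inr (t s : Bool) :
    ¬ (G.twoExt u).Adj (.inr t) (.inr s) := fun h => h

end SimpleGraph

/-- a prime graph has a prime two-vertex extension in which the two new
vertices are non-adjacent. -/
theorem exists_prime_two_extension_nonadjacent {V : Type*} [Fintype V]
    (G : SimpleGraph V) (hG : G.IsPrimeGraph) :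
    ∃ H : SimpleGraph (V ⊕ Bool), G.IsExtension H ∧
      ¬ H.Adj (Sum.inr true) (Sum.inr false) ∧ H.IsPrimeGraph := by
  classical
  obtain ⟨hcard, hmod⟩ := hG
  have hV : Nonempty V := by
    rw [← Fintype.card_pos_iff]; omega
  -- G has no isolated vertex
  have hniso : ∀ x : V, ∃ w, G.Adj x w := by
    intro x
    by_contra hx
    push_neg at hx
    have hM : G.IsModule {x}ᶜ := by
      intro v hv
      right
      intro m hm
      have hvx : v = x := by simpa using hv
      subst hvx
      exact hx m
    rcases hmod _ hM with h1 | ⟨y, h1⟩ | h1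
    · obtain ⟨y, hy⟩ := Fintype.exists_ne_of_one_lt_card (by omega) x
      have : y ∈ ({x}ᶜ : Set V) := by simpa using hy
      rw [h1] at this
      exact this
    · have hsub : (Set.univ : Set V) ⊆ {x, y} := by
        intro z _
        by_cases hz : z = x
        · exact Or.inl hz
        · have : z ∈ ({x}ᶜ : Set V) := by simpa using hz
          rw [h1] at this
          exact Or.inr this
      have h2 : Fintype.card V ≤ 2 := by
        have := Set.ncard_le_ncard hsub (Set.toFinite _)
        rw [Set.ncard_univ, Nat.card_eq_fintype_card] at this
        calc Fintype.card V ≤ ({x, y} : Set V).ncard := this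
          _ ≤ 2 := by
            refine le_trans (Set.ncard_insert_le x {y}) ?_
            simp
      omega
    · have : x ∈ ({x}ᶜ : Set V) := by rw [h1]; trivial
      simp at this
  -- there is a good vertex u
  obtain ⟨u, hu⟩ : ∃ u : V, ¬∃ x, x ≠ u ∧ ∀ v, G.Adj x v ↔ (v ≠ x ∧ v ≠ u) := by
    by_contra h
    push_neg at h
    obtain ⟨u0⟩ := hV
    obtain ⟨x0, hx0ne, hx0⟩ := h u0
    obtain ⟨x1, hx1ne, hx1⟩ := h x0
    by_cases hc : x1 = u0
    · subst hc
      have hM : G.IsModule {x0, x1} := by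
        intro v hv
        simp only [Set.mem_insert_iff, Set.mem_singleton_iff, not_or] at hv
        left
        intro m hm
        rcases hm with rfl | rfl
        · exact ((hx0 v).2 ⟨hv.1, hv.2⟩).symm
        · exact ((hx1 v).2 ⟨hv.2, hv.1⟩).symm
      rcases hmod _ hM with h1 | ⟨y, h1⟩ | h1
      · have : x0 ∈ ({x0, x1} : Set V) := by simp
        rw [h1] at this; exact this
      · have h2 : x0 ∈ ({y} : Set V) := by rw [← h1]; simp
        have h3 : x1 ∈ ({y} : Set V) := by rw [← h1]; simp
        simp only [Set.mem_singleton_iff] at h2 h3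
        exact hx0ne (h2.trans h3.symm)
      · have hsub : (Set.univ : Set V) ⊆ {x0, x1} := h1 ▸ le_refl _
        have h2 : Fintype.card V ≤ 2 := by
          have := Set.ncard_le_ncard hsub (Set.toFinite _)
          rw [Set.ncard_univ, Nat.card_eq_fintype_card] at this
          calc Fintype.card V ≤ ({x0, x1} : Set V).ncard := this
            _ ≤ 2 := le_trans (Set.ncard_insert_le x0 {x1}) (by simp)
        omega
    · have h1 : G.Adj x0 x1 := (hx0 x1).2 ⟨hx1ne, hc⟩
      exact ((hx1 x0).1 h1.symm).2 rfl
  refine ⟨G.twoExt u, fun a b => Iff.rfl, fun h => h, ?_, ?_⟩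
  · simp only [Fintype.card_sum, Fintype.card_bool]; omega
  intro M hM
  by_contra h0
  push_neg at h0
  obtain ⟨hne, hsing, huniv⟩ := h0
  -- two distinct elements of M
  obtain ⟨p, hp⟩ := hne
  obtain ⟨q, hq, hqp⟩ : ∃ q ∈ M, q ≠ p := by
    by_contra h
    push_neg at h
    exact hsing p (Set.eq_singleton_iff_unique_mem.2 ⟨hp, h⟩)
  -- an element outside M
  obtain ⟨z, hz⟩ : ∃ z, z ∉ M := by
    by_contra h
    push_neg at h
    exact huniv (Set.eq_univ_of_forall h)
  by_cases hbt : (Sum.inr true : V ⊕ Bool) ∈ M <;>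
    by_cases hbf : (Sum.inr false : V ⊕ Bool) ∈ M
  · -- both new vertices in M
    rcases z with v | t
    · rcases hM _ hz with hall | hnone
      · have h1 : v ≠ u := by simpa using hall _ hbt
        have h2 : v = u := by simpa using hall _ hbf
        exact h1 h2
      · rcases eq_or_ne v u with rfl | hvu
        · exact hnone _ hbf (by simp)
        · exact hnone _ hbt (by simp [hvu])
    · cases t
      · exact hz hbf
      · exact hz hbt
  · -- a = inr true ∈ M, b = inr false ∉ M
    have hnone_f : ∀ m ∈ M, ¬ (G.twoExt u).Adj (.inr false) m := by
      rcases hM _ hbf with hall | hnone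
      · exact absurd (hall _ hbt) (by simp)
      · exact hnone
    have hum : (Sum.inl u : V ⊕ Bool) ∉ M := fun hm => hnone_f _ hm (by simp)
    have hnone_u : ∀ m ∈ M, ¬ (G.twoExt u).Adj (.inl u) m := by
      rcases hM _ hum with hall | hnone
      · exact absurd (hall _ hbt) (by simp)
      · exact hnone
    set S : Set V := {v : V | Sum.inl v ∈ M} with hSdef
    have hSmod : G.IsModule S := by
      intro v hv
      rcases eq_or_ne v u with rfl | hvu
      · right
        intro m hm hadj
        exact hnone_u _ hm (by simpa using hadj)
      · rcases hM _ (hv : Sum.inl v ∉ M) with hall | hnone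
        · left
          intro m hm
          simpa using hall _ hm
        · exact absurd (hnone _ hbt) (by simp [hvu])
    rcases hmod _ hSmod with hS | ⟨x, hS⟩ | hS
    · apply hsing (Sum.inr true)
      ext y
      simp only [Set.mem_singleton_iff]
      constructor
      · rintro hy
        rcases y with v | t
        · have : v ∈ S := hy
          rw [hS] at this; exact this.elim
        · cases t
          · exact absurd hy hbf
          · rfl
      · rintro rfl; exact hbt
    · have hxM : (Sum.inl x : V ⊕ Bool) ∈ M := by
        have : x ∈ S := by rw [hS]; rfl
        exact this
      apply hu
      refine ⟨x, ?_, ?_⟩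
      · rintro rfl; exact hum hxM
      · intro v
        constructor
        · intro hadj
          refine ⟨(G.ne_of_adj hadj).symm, ?_⟩
          rintro rfl
          exact hnone_u _ hxM (by simpa using hadj.symm)
        · rintro ⟨hvx, hvu⟩
          have hvM : (Sum.inl v : V ⊕ Bool) ∉ M := by
            intro hm
            exact hvx (by have : v ∈ S := hm; rwa [hS] at this)
          rcases hM _ hvM with hall | hnone
          · exact (by simpa using hall _ hxM : G.Adj v x).symm
          · exact absurd (hnone _ hbt) (by simp [hvu])
    · exact hum (show u ∈ S by rw [hS]; trivial)
  · -- b = inr false ∈ M, a = inr true ∉ M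
    have hnone_t : ∀ m ∈ M, ¬ (G.twoExt u).Adj (.inr true) m := by
      rcases hM _ hbt with hall | hnone
      · exact absurd (hall _ hbf) (by simp)
      · exact hnone
    have hsub : M ⊆ {Sum.inr false, Sum.inl u} := by
      intro m hm
      rcases m with v | t
      · have : v = u := by
          have := hnone_t _ hm
          simpa using this
        subst this
        exact Or.inr rfl
      · cases t
        · exact Or.inl rfl
        · exact absurd hm hbt
    have hum : (Sum.inl u : V ⊕ Bool) ∈ M := by
      rcases hsub hp with h1 | h1 <;> rcases hsub hq with h2 | h2
      · exact absurd (h1.trans h2.symm) hqp.symm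
      · exact h2 ▸ hq
      · exact h1 ▸ hp
      · exact absurd (h1.trans h2.symm) hqp.symm
    obtain ⟨w, hw⟩ := hniso u
    have hwu : w ≠ u := fun e => G.irrefl (v := u) (e ▸ hw)
    have hwM : (Sum.inl w : V ⊕ Bool) ∉ M := by
      intro hm
      rcases hsub hm with h1 | h1
      · exact absurd h1 (by simp)
      · exact hwu (by simpa using h1)
    rcases hM _ hwM with hall | hnone
    · exact hwu (by simpa using hall _ hbf)
    · exact hnone _ hum (by simpa using hw.symm)
  · -- both new vertices outside M
    set S : Set V := {v : V | Sum.inl v ∈ M} with hSdef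
    have hSmod : G.IsModule S := by
      intro v hv
      rcases hM _ (hv : Sum.inl v ∉ M) with hall | hnone
      · left; intro m hm; simpa using hall _ hm
      · right; intro m hm hadj; exact hnone _ hm (by simpa using hadj)
    have hMeq : ∀ y ∈ M, ∃ v, y = Sum.inl v ∧ v ∈ S := by
      intro y hy
      rcases y with v | t
      · exact ⟨v, rfl, hy⟩
      · cases t
        · exact absurd hy hbf
        · exact absurd hy hbt
    rcases hmod _ hSmod with hS | ⟨x, hS⟩ | hS
    · obtain ⟨v, rfl, hv⟩ := hMeq _ hp
      rw [hS] at hv; exact hv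
    · apply hsing (Sum.inl x)
      ext y
      simp only [Set.mem_singleton_iff]
      constructor
      · intro hy
        obtain ⟨v, rfl, hv⟩ := hMeq _ hy
        rw [hS] at hv
        exact congrArg Sum.inl hv
      · rintro rfl
        exact (by rw [hS]; rfl : x ∈ S)
    · obtain ⟨w, hwu⟩ := Fintype.exists_ne_of_one_lt_card (by omega) u
      have huM : (Sum.inl u : V ⊕ Bool) ∈ M := (by rw [hS]; trivial : u ∈ S)
      have hwM : (Sum.inl w : V ⊕ Bool) ∈ M := (by rw [hS]; trivial : w ∈ S)
      rcases hM _ hbt with hall | hnone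
      · exact (by simpa using hall _ huM : u ≠ u) rfl
      · exact (by simpa using hnone _ hwM : ¬ w ≠ u) hwu
end

section
/- For every finite graph G with max(α_M(G), ω_M(G)) ≥ 2, the prime bound satisfies p(G) ≥ ⌈log₂(max(α_M(G), ω_M(G)))⌉. Equivalently: if S is a module of G that is a clique or a stable set with |S| ≥ 2, and H is an extension of G with |V(H) \ V(G)| < log₂(|S|), then H is not prime. -/
open Sum

/-- construction -/
def myExt {V : Type*} [Fintype V] (G : SimpleGraph V) :
    SimpleGraph (V ⊕ Fin (Fintype.card V + 1)) where
  Adj x y := match x, y with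
    | Sum.inl u, Sum.inl v => G.Adj u v
    | Sum.inl u, Sum.inr j => j = Fin.castSucc (Fintype.equivFin V u) ∨ j = Fin.last _
    | Sum.inr j, Sum.inl u => j = Fin.castSucc (Fintype.equivFin V u) ∨ j = Fin.last _
    | Sum.inr _, Sum.inr _ => False
  symm := by constructor; rintro (u|j) (v|k) h
             · exact h.symm
             · exact h
             · exact h
             · exact h
  loopless := by constructor; rintro (u|j) h
                 · exact G.loopless.irrefl u h
                 · exact h

@[simp] lemma myExt_inl_inl {V : Type*} [Fintype V] (G : SimpleGraph V) (u v : V) :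
    (myExt G).Adj (inl u) (inl v) ↔ G.Adj u v := Iff.rfl

@[simp] lemma myExt_inl_inr {V : Type*} [Fintype V] (G : SimpleGraph V) (u : V) (j) :
    (myExt G).Adj (inl u) (inr j) ↔
      (j = Fin.castSucc (Fintype.equivFin V u) ∨ j = Fin.last _) := Iff.rfl

@[simp] lemma myExt_inr_inl {V : Type*} [Fintype V] (G : SimpleGraph V) (u : V) (j) :
    (myExt G).Adj (inr j) (inl u) ↔
      (j = Fin.castSucc (Fintype.equivFin V u) ∨ j = Fin.last _) := Iff.rfl

@[simp] lemma myExt_inr_inr {V : Type*} [Fintype V] (G : SimpleGraph V) (j k) :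
    ¬ (myExt G).Adj (inr j) (inr k) := fun h => h

lemma myExt_isExtension {V : Type*} [Fintype V] (G : SimpleGraph V) :
    G.IsExtension (myExt G) := fun _ _ => Iff.rfl

lemma key_distinguisher {W : Type*} (H : SimpleGraph W) {M : Set W}
    (hM : H.IsModule M) {x y z : W} (hx : x ∈ M) (hy : y ∈ M)
    (hzx : H.Adj z x) (hzy : ¬ H.Adj z y) : z ∈ M := by
  by_contra hz
  rcases hM z hz with hall | hnone
  · exact hzy (hall y hy)
  · exact hnone x hx hzx

lemma myExt_prime {V : Type*} [Fintype V] (G : SimpleGraph V)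
    (hn : 2 ≤ Fintype.card V) : (myExt G).IsPrimeGraph := by
  classical
  set n := Fintype.card V with hnn
  set e := Fintype.equivFin V with he
  constructor
  · rw [Fintype.card_sum, Fintype.card_fin]
    omega
  intro M hM
  by_cases hemp : M = ∅
  · exact Or.inl hemp
  obtain ⟨x, hx⟩ := Set.nonempty_iff_ne_empty.2 hemp
  by_cases hsing : ∀ y ∈ M, y = x
  · refine Or.inr (Or.inl ⟨x, ?_⟩)
    ext z; simp only [Set.mem_singleton_iff]
    exact ⟨fun hz => hsing z hz, fun hz => hz ▸ hx⟩
  push_neg at hsing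
  obtain ⟨y, hy, hyx⟩ := hsing
  refine Or.inr (Or.inr ?_)
  -- mixA: inl + inr in M gives inr last in M
  have mixA : ∀ u : V, ∀ j, inl u ∈ M → inr j ∈ M → inr (Fin.last n) ∈ M := by
    intro u j hu hj
    exact key_distinguisher _ hM hu hj (Or.inr rfl) (by simp)
  -- mixB
  have mixB : ∀ u : V, inl u ∈ M → inr (Fin.last n) ∈ M →
      inr (Fin.castSucc (e u)) ∈ M := by
    intro u hu hl
    refine key_distinguisher _ hM hu hl (by simp [he, hnn]) (by simp [he, hnn])
  -- Step 1: some inl and inr last in M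
  have step1 : ∃ u : V, inl u ∈ M ∧ inr (Fin.last n) ∈ M := by
    have hVcard : 1 < Fintype.card V := hn
    rcases x with u | j <;> rcases y with v | k
    · -- two inls
      have huv : u ≠ v := fun h => hyx (by rw [h])
      have h1 : inr (Fin.castSucc (e u)) ∈ M := by
        refine key_distinguisher _ hM hx hy (by simp [he]) ?_
        simp only [myExt_inr_inl]
        push_neg
        refine ⟨?_, ?_⟩
        · exact fun h => huv (e.injective (Fin.castSucc_injective _ h))
        · exact (Fin.castSucc_lt_last _).ne
      exact ⟨u, hx, mixA u _ hx h1⟩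
    · exact ⟨u, hx, mixA u _ hx hy⟩
    · exact ⟨v, hy, mixA v _ hy hx⟩
    · -- two inrs
      have hjk : j ≠ k := fun h => hyx (by rw [h])
      have aux : ∀ a b : Fin (n+1), inr a ∈ M → inr b ∈ M → a ≠ Fin.last n →
          b ≠ a → ∃ u : V, inl u ∈ M := by
        intro a b ha hb hal hba
        obtain ⟨a', ha'⟩ := (Fin.exists_castSucc_eq.2 hal).imp (fun _ h => h.symm)
        rcases eq_or_ne b (Fin.last n) with hbl | hbl
        · obtain ⟨u', hu'⟩ := Fintype.exists_ne_of_one_lt_card hVcard (e.symm a')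
          have heu' : e u' ≠ a' := fun hh => hu' (by rw [← hh, Equiv.symm_apply_apply])
          refine ⟨u', key_distinguisher _ hM hb ha ?_ ?_⟩
          · simp [hbl]; exact Or.inr rfl
          · simp only [myExt_inl_inr, ha']
            push_neg
            exact ⟨fun hh => heu' (Fin.castSucc_injective _ hh).symm,
              fun hh => hal (ha' ▸ hh)⟩
        · obtain ⟨b', hb'⟩ := (Fin.exists_castSucc_eq.2 hbl).imp (fun _ h => h.symm)
          refine ⟨e.symm a', key_distinguisher _ hM ha hb ?_ ?_⟩
          · simp [ha', he]
          · simp only [myExt_inl_inr, hb']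
            push_neg
            constructor
            · intro hh
              exact hba (by rw [ha', hb', Fin.castSucc_inj.1 hh, Equiv.apply_symm_apply])
            · exact fun hh => hbl (hb' ▸ hh)
      have getinl : ∃ u : V, inl u ∈ M := by
        rcases eq_or_ne j (Fin.last n) with hj | hj
        · have hk : k ≠ Fin.last n := fun h => hjk (hj.trans h.symm)
          exact aux k j hy hx hk hjk
        · exact aux j k hx hy hj (Ne.symm hjk)
      obtain ⟨u, hu⟩ := getinl
      exact ⟨u, hu, mixA u _ hu hx⟩
  obtain ⟨u, hu, hlast⟩ := step1
  have hcast : inr (Fin.castSucc (e u)) ∈ M := mixB u hu hlast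
  -- Step 3 : all inr in M
  have step3 : ∀ k, inr k ∈ M := by
    intro k
    rcases eq_or_ne k (Fin.last n) with hk | hk
    · exact hk ▸ hlast
    obtain ⟨k', hk'⟩ := (Fin.exists_castSucc_eq.2 hk).imp (fun _ h => h.symm)
    rcases eq_or_ne k' (e u) with hke | hke
    · exact hk' ▸ hke ▸ hcast
    set w : V ⊕ Fin (n+1) := inl (e.symm k') with hw
    have hwadj : (myExt G).Adj w (inr k) := by
      simp [hw, hk', he]
    have hwM : w ∈ M := by
      by_contra hwM
      rcases hM w hwM with hall | hnone
      · have := hall _ hcast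
        simp only [hw, myExt_inl_inr] at this
        rcases this with h1 | h1
        · rw [Equiv.apply_symm_apply] at h1
          exact hke (Fin.castSucc_injective _ h1).symm
        · exact absurd h1 (Fin.castSucc_lt_last _).ne
      · exact hnone _ hlast (Or.inr rfl)
    by_contra hkM
    rcases hM (inr k) hkM with hall | hnone
    · exact (myExt_inr_inr G k (Fin.last n)) (hall _ hlast)
    · exact hnone w hwM hwadj.symm
  -- Step 4: all inl in M
  have step4 : ∀ v : V, inl v ∈ M := by
    intro v
    have hex : ∃ j : Fin (n+1), j ≠ Fin.castSucc (e v) ∧ j ≠ Fin.last n := by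
      by_contra hc
      push_neg at hc
      have : (Finset.univ : Finset (Fin (n+1))).card ≤ 2 := by
        have hsub : (Finset.univ : Finset (Fin (n+1))) ⊆
            {Fin.castSucc (e v), Fin.last n} := by
          intro j _
          simp only [Finset.mem_insert, Finset.mem_singleton]
          by_contra hj
          push_neg at hj
          exact hj.2 (hc j hj.1)
        calc (Finset.univ : Finset (Fin (n+1))).card ≤ _ := Finset.card_le_card hsub
          _ ≤ 2 := Finset.card_insert_le _ _ |>.trans (by simp)
      simp only [Finset.card_univ, Fintype.card_fin] at this
      omega
    obtain ⟨j, hj1, hj2⟩ := hex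
    by_contra hvM
    rcases hM (inl v) hvM with hall | hnone
    · have := hall _ (step3 j)
      simp only [myExt_inl_inr] at this
      tauto
    · exact hnone _ hlast (Or.inr rfl)
  ext z
  simp only [Set.mem_univ, iff_true]
  rcases z with v | k
  exacts [step4 v, step3 k]

lemma compl_isModule {V : Type*} {G : SimpleGraph V} {M : Set V}
    (h : Gᶜ.IsModule M) : G.IsModule M := by
  intro v hv
  rcases h v hv with h1 | h2
  · right; intro m hm; exact ((SimpleGraph.compl_adj _ _ _).1 (h1 m hm)).2
  · left; intro m hm
    by_contra hna
    exact h2 m hm ((SimpleGraph.compl_adj _ _ _).2 ⟨fun he => hv (he ▸ hm), hna⟩)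

lemma exists_max_module {V : Type*} [Fintype V] (G : SimpleGraph V) :
    ∃ M : Set V, G.IsModule M ∧ G.IsClique M ∧ M.ncard = G.modularCliqueNumber := by
  have hne : ({n : ℕ | ∃ M : Set V, G.IsModule M ∧ G.IsClique M ∧ M.ncard = n}).Nonempty := by
    refine ⟨0, ∅, ?_, ?_, by simp⟩
    · intro v _; left; intro m hm; exact absurd hm (Set.notMem_empty m)
    · simp
  have hbdd : BddAbove {n : ℕ | ∃ M : Set V, G.IsModule M ∧ G.IsClique M ∧ M.ncard = n} := by
    refine ⟨Fintype.card V, ?_⟩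
    rintro n ⟨M, -, -, rfl⟩
    have := Set.ncard_le_ncard (Set.subset_univ M) (Set.toFinite _)
    rwa [Set.ncard_univ, Nat.card_eq_fintype_card] at this
  exact Nat.sSup_mem hne hbdd

/-- lower bound `p(G) ≥ ⌈log₂(max(α_M(G), ω_M(G)))⌉`, and its equivalent
formulation about extensions that are too small. -/
theorem primeBound_lower_bound {V : Type*} [Fintype V] (G : SimpleGraph V)
    (h : 2 ≤ max G.modularStabilityNumber G.modularCliqueNumber) :
    Nat.clog 2 (max G.modularStabilityNumber G.modularCliqueNumber) ≤ G.primeBound ∧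
    ∀ S : Set V, G.IsModule S → (G.IsClique S ∨ G.IsStableSet S) → 2 ≤ S.ncard →
      ∀ (p : ℕ) (H : SimpleGraph (V ⊕ Fin p)), G.IsExtension H →
        2 ^ p < S.ncard → ¬ H.IsPrimeGraph := by
  classical
  have main : ∀ S : Set V, G.IsModule S → (G.IsClique S ∨ G.IsStableSet S) → 2 ≤ S.ncard →
      ∀ (p : ℕ) (H : SimpleGraph (V ⊕ Fin p)), G.IsExtension H →
        2 ^ p < S.ncard → ¬ H.IsPrimeGraph := by
    intro S hSmod hScs hS2 p H hext hlt hprime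
    haveI : Fintype S := S.toFinite.fintype
    have hcardS : Fintype.card S = S.ncard := by
      rw [Set.ncard_eq_toFinset_card', Set.toFinset_card]
    set f : S → (Fin p → Bool) := fun s j =>
      @decide (H.Adj (Sum.inl s.1) (Sum.inr j)) (Classical.propDecidable _) with hf
    have hcard : Fintype.card (Fin p → Bool) < Fintype.card S := by
      rw [hcardS]
      simpa using hlt
    obtain ⟨s, t, hst, hfst⟩ := Fintype.exists_ne_map_eq_of_card_lt f hcard
    have hst' : (s : V) ≠ (t : V) := fun hh => hst (Subtype.ext hh)
    set M' : Set (V ⊕ Fin p) := {Sum.inl s.1, Sum.inl t.1} with hM'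
    have hmod : H.IsModule M' := by
      rintro (v | j) hx
      · have hvs : v ≠ s.1 := fun hh => hx (by simp [hM', hh])
        have hvt : v ≠ t.1 := fun hh => hx (by simp [hM', hh])
        by_cases hvS : v ∈ S
        · rcases hScs with hcl | hstab
          · left
            rintro m (rfl | rfl)
            · exact (hext v s.1).2 (hcl hvS s.2 hvs)
            · exact (hext v t.1).2 (hcl hvS t.2 hvt)
          · right
            rintro m (rfl | rfl)
            · intro hadj
              exact ((SimpleGraph.compl_adj _ _ _).1 (hstab hvS s.2 hvs)).2 ((hext v s.1).1 hadj)
            · intro hadj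
              exact ((SimpleGraph.compl_adj _ _ _).1 (hstab hvS t.2 hvt)).2 ((hext v t.1).1 hadj)
        · rcases hSmod v hvS with hall | hnone
          · left
            rintro m (rfl | rfl)
            · exact (hext v s.1).2 (hall s.1 s.2)
            · exact (hext v t.1).2 (hall t.1 t.2)
          · right
            rintro m (rfl | rfl)
            · exact fun hadj => hnone s.1 s.2 ((hext v s.1).1 hadj)
            · exact fun hadj => hnone t.1 t.2 ((hext v t.1).1 hadj)
      · have hiff : H.Adj (Sum.inl s.1) (Sum.inr j) ↔ H.Adj (Sum.inl t.1) (Sum.inr j) := by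
          have := congrFun hfst j
          simp only [hf] at this
          constructor <;> intro hh
          · have h1 : decide (H.Adj (Sum.inl s.1) (Sum.inr j)) = true := decide_eq_true hh
            rw [this] at h1
            exact of_decide_eq_true h1
          · have h1 : decide (H.Adj (Sum.inl t.1) (Sum.inr j)) = true := decide_eq_true hh
            rw [← this] at h1
            exact of_decide_eq_true h1
        by_cases hadj : H.Adj (Sum.inl s.1) (Sum.inr j)
        · left
          rintro m (rfl | rfl)
          · exact hadj.symm
          · exact (hiff.1 hadj).symm
        · right
          rintro m (rfl | rfl)
          · exact fun hh => hadj hh.symm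
          · exact fun hh => hadj (hiff.2 hh.symm)
    rcases hprime.2 M' hmod with h1 | h2 | h3
    · exact absurd h1 (by
        simp only [hM']
        intro hh
        have : Sum.inl s.1 ∈ ({Sum.inl s.1, Sum.inl t.1} : Set (V ⊕ Fin p)) := by simp
        rw [hh] at this
        exact this)
    · obtain ⟨w, hw⟩ := h2
      have h1 : Sum.inl s.1 = w := by
        have : Sum.inl s.1 ∈ M' := by simp [hM']
        rwa [hw, Set.mem_singleton_iff] at this
      have h2' : Sum.inl t.1 = w := by
        have : Sum.inl t.1 ∈ M' := by simp [hM']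
        rwa [hw, Set.mem_singleton_iff] at this
      exact hst' (Sum.inl_injective (h1.trans h2'.symm))
    · have hc4 := hprime.1
      have : (Set.univ : Set (V ⊕ Fin p)).ncard ≤ 2 := by
        rw [← h3, hM']
        exact (Set.ncard_insert_le _ _).trans (by simp)
      rw [Set.ncard_univ, Nat.card_eq_fintype_card] at this
      omega
  refine ⟨?_, main⟩
  -- extract a maximal module
  have hex : ∃ S : Set V, G.IsModule S ∧ (G.IsClique S ∨ G.IsStableSet S) ∧
      S.ncard = max G.modularStabilityNumber G.modularCliqueNumber := by
    rcases max_cases G.modularStabilityNumber G.modularCliqueNumber with ⟨hmax, -⟩ | ⟨hmax, -⟩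
    · obtain ⟨S, h1, h2, h3⟩ := exists_max_module Gᶜ
      exact ⟨S, compl_isModule h1, Or.inr h2, by rw [h3, hmax]; rfl⟩
    · obtain ⟨S, h1, h2, h3⟩ := exists_max_module G
      exact ⟨S, h1, Or.inl h2, by rw [h3, hmax]⟩
  obtain ⟨S, hSmod, hScs, hScard⟩ := hex
  have hS2 : 2 ≤ S.ncard := hScard ▸ h
  have hV2 : 2 ≤ Fintype.card V := by
    have := Set.ncard_le_ncard (Set.subset_univ S) (Set.toFinite _)
    rw [Set.ncard_univ, Nat.card_eq_fintype_card] at this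
    omega
  have hnonempty : {p : ℕ | ∃ H : SimpleGraph (V ⊕ Fin p),
      G.IsExtension H ∧ H.IsPrimeGraph}.Nonempty :=
    ⟨Fintype.card V + 1, myExt G, myExt_isExtension G, myExt_prime G hV2⟩
  refine le_csInf hnonempty ?_
  rintro q ⟨H, hext, hprime⟩
  have hle : max G.modularStabilityNumber G.modularCliqueNumber ≤ 2 ^ q := by
    by_contra hgt
    push_neg at hgt
    exact main S hSmod hScs hS2 q H hext (hScard ▸ hgt) hprime
  exact (Nat.clog_le_iff_le_pow (by norm_num)).2 hle
end

section
/- Let G be a finite graph such that G or its complement has at least one isolated vertex. Then p(G) ≥ ⌈log₂(max(ι(G), ι(Ḡ)) + 1)⌉, where ι denotes the number of isolated vertices. Equivalently: if H is an extension of G with 2^{|V(H)\V(G)|} ≤ ι(G), then H is not prime. -/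
set_option linter.unreachableTactic false
set_option maxHeartbeats 1000000

open Classical in
lemma keyA {V : Type*} [Fintype V] (G : SimpleGraph V) (p : ℕ)
    (H : SimpleGraph (V ⊕ Fin p)) (hext : G.IsExtension H)
    (hcard : 2 ^ p ≤ G.isolatedCount) : ¬ H.IsPrimeGraph := by
  classical
  rintro ⟨hc4, hmod⟩
  set S : Set V := {v : V | ∀ w, ¬ G.Adj v w} with hS
  have hSfin : S.Finite := Set.toFinite _
  set f : V → Finset (Fin p) := fun v => {w : Fin p | H.Adj (Sum.inl v) (Sum.inr w)} with hf
  -- neighborhoods of isolated vertices in H are determined by f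
  by_cases hzero : ∃ v ∈ S, f v = ∅
  · -- isolated vertex in H
    obtain ⟨v, hvS, hfv⟩ := hzero
    have hiso : ∀ x, ¬ H.Adj (Sum.inl v) x := by
      rintro (u | w) hadj
      · exact hvS u ((hext v u).mp hadj)
      · have : w ∈ f v := by simp [hf, hadj]
        simp [hfv] at this
    set M : Set (V ⊕ Fin p) := Set.univ \ {Sum.inl v} with hM
    have hmodM : H.IsModule M := by
      intro x hx
      right
      intro m hm hadj
      have hxv : x = Sum.inl v := by
        by_contra hne
        exact hx ⟨Set.mem_univ _, hne⟩
      subst hxv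
      exact hiso m hadj
    rcases hmod M hmodM with h1 | ⟨u, h2⟩ | h3
    · -- M empty: card ≤ 1, contradiction with 4 ≤ card
      have : ∀ x : V ⊕ Fin p, x = Sum.inl v := by
        intro x
        by_contra hne
        have : x ∈ M := ⟨Set.mem_univ _, hne⟩
        simp [h1] at this
      have := Fintype.card_le_one_iff.mpr (fun a b => (this a).trans (this b).symm)
      omega
    · have : ∀ x : V ⊕ Fin p, x = Sum.inl v ∨ x = u := by
        intro x
        by_cases hne : x = Sum.inl v
        · exact Or.inl hne
        · have : x ∈ M := ⟨Set.mem_univ _, hne⟩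
          rw [h2] at this
          exact Or.inr this
      have h2' : Fintype.card (V ⊕ Fin p) ≤ ({Sum.inl v, u} : Finset (V ⊕ Fin p)).card :=
        Finset.card_le_card_of_injOn id (fun x _ => by
          rcases this x with h | h <;> simp [h]) (fun x _ y _ h => h)
      have := Finset.card_insert_le (Sum.inl v) ({u} : Finset (V ⊕ Fin p))
      simp at this
      omega
    · have : Sum.inl v ∈ M := h3 ▸ Set.mem_univ _
      exact this.2 rfl
  · -- all f v nonempty on S; pigeonhole
    push_neg at hzero
    have hcard' : 2 ^ p ≤ S.ncard := hcard
    have hScard : 2 ^ p ≤ hSfin.toFinset.card := by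
      rwa [Set.ncard_eq_toFinset_card S hSfin] at hcard'
    have hmaps : ∀ v ∈ hSfin.toFinset, f v ∈ (Finset.univ.erase (∅ : Finset (Fin p))) := by
      intro v hv
      simp only [Finset.mem_erase, Finset.mem_univ, and_true]
      exact Finset.nonempty_iff_ne_empty.mp (hzero v (hSfin.mem_toFinset.mp hv))
    have hlt : (Finset.univ.erase (∅ : Finset (Fin p))).card < hSfin.toFinset.card := by
      have := Finset.card_erase_of_mem (Finset.mem_univ (∅ : Finset (Fin p)))
      rw [this, Finset.card_univ, Fintype.card_finset, Fintype.card_fin]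
      have : 1 ≤ 2 ^ p := Nat.one_le_two_pow
      omega
    obtain ⟨u, hu, v, hv, huv, hfuv⟩ :=
      Finset.exists_ne_map_eq_of_card_lt_of_maps_to hlt hmaps
    have huS : u ∈ S := hSfin.mem_toFinset.mp hu
    have hvS : v ∈ S := hSfin.mem_toFinset.mp hv
    set M : Set (V ⊕ Fin p) := {Sum.inl u, Sum.inl v} with hM
    have hadj_iff : ∀ (w : Fin p) (a : V), (H.Adj (Sum.inr w) (Sum.inl a) ↔ w ∈ f a) := by
      intro w a
      simp [hf, H.adj_comm]
    have hmodM : H.IsModule M := by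
      rintro (a | w) hx
      · right
        rintro m hm hadj
        rcases hm with hm | hm <;> subst hm
        · exact huS a (((hext a u).mp hadj).symm)
        · exact hvS a (((hext a v).mp hadj).symm)
      · by_cases hw : w ∈ f u
        · left
          rintro m (hm | hm) <;> subst hm
          · exact (hadj_iff w u).mpr hw
          · exact (hadj_iff w v).mpr (hfuv ▸ hw)
        · right
          rintro m (hm | hm) hadj <;> subst hm
          · exact hw ((hadj_iff w u).mp hadj)
          · exact hw (hfuv ▸ (hadj_iff w v).mp hadj)
    rcases hmod M hmodM with h1 | ⟨x, h2⟩ | h3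
    · have : Sum.inl u ∈ M := Or.inl rfl
      simp [h1] at this
    · have h4 : (Sum.inl u : V ⊕ Fin p) ∈ ({x} : Set (V ⊕ Fin p)) := h2 ▸ Or.inl rfl
      have h5 : (Sum.inl v : V ⊕ Fin p) ∈ ({x} : Set (V ⊕ Fin p)) := h2 ▸ Or.inr rfl
      rw [Set.mem_singleton_iff] at h4 h5
      exact huv (Sum.inl.inj (h4.trans h5.symm))
    · -- M = univ but card ≥ 4 > 2
      have h2' : Fintype.card (V ⊕ Fin p) ≤ ({Sum.inl u, Sum.inl v} : Finset (V ⊕ Fin p)).card :=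
        Finset.card_le_card_of_injOn id (fun x _ => by
          have : x ∈ M := h3 ▸ Set.mem_univ x
          simp only [hM, Set.mem_insert_iff, Set.mem_singleton_iff] at this
          rcases this with h | h <;> simp [h]) (fun x _ y _ h => h)
      have := Finset.card_insert_le (Sum.inl u) ({Sum.inl v} : Finset (V ⊕ Fin p))
      simp at this
      omega

/-- auxiliary relation for the extra vertices -/
def extraRel (n : ℕ) (a b : ℕ) : Prop :=
  (a ≤ n ∧ b = n+1) ∨ (a = n+1 ∧ b = n+2) ∨ (a = n+2 ∧ b = n+3)

/-- a prime extension of `G` by `n + 4` vertices -/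
def primeExtG {V : Type*} (G : SimpleGraph V) (n : ℕ) (e : V ≃ Fin n) :
    SimpleGraph (V ⊕ Fin (n+4)) where
  Adj x y := match x, y with
    | Sum.inl u, Sum.inl v => G.Adj u v
    | Sum.inl v, Sum.inr k => (e v : ℕ) < k.val ∧ k.val ≤ n
    | Sum.inr k, Sum.inl v => (e v : ℕ) < k.val ∧ k.val ≤ n
    | Sum.inr k, Sum.inr l => extraRel n k.val l.val ∨ extraRel n l.val k.val
  symm := by
    constructor
    rintro (u | k) (v | l) h
    · exact h.symm
    · exact h
    · exact h
    · tauto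
  loopless := by
    constructor
    rintro (u | k) h
    · exact G.loopless.irrefl u h
    · unfold extraRel at h; omega

section
variable {V : Type*} (G : SimpleGraph V) (n : ℕ) (e : V ≃ Fin n)

@[simp] lemma primeExtG_adj_ll (u v : V) :
    (primeExtG G n e).Adj (Sum.inl u) (Sum.inl v) ↔ G.Adj u v := Iff.rfl

@[simp] lemma primeExtG_adj_lr (v : V) (k : Fin (n+4)) :
    (primeExtG G n e).Adj (Sum.inl v) (Sum.inr k) ↔ (e v : ℕ) < k.val ∧ k.val ≤ n := Iff.rfl

@[simp] lemma primeExtG_adj_rl (v : V) (k : Fin (n+4)) :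
    (primeExtG G n e).Adj (Sum.inr k) (Sum.inl v) ↔ (e v : ℕ) < k.val ∧ k.val ≤ n := Iff.rfl

@[simp] lemma primeExtG_adj_rr (k l : Fin (n+4)) :
    (primeExtG G n e).Adj (Sum.inr k) (Sum.inr l) ↔
      extraRel n k.val l.val ∨ extraRel n l.val k.val := Iff.rfl

lemma primeExtG_isExtension : G.IsExtension (primeExtG G n e) := fun _ _ => Iff.rfl

lemma primeExtG_isPrime [Fintype V] : (primeExtG G n e).IsPrimeGraph := by
  classical
  have hcardV : Fintype.card V = n := by
    rw [Fintype.card_congr e, Fintype.card_fin]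
  constructor
  · simp only [Fin.val_mk, Fintype.card_sum, Fintype.card_fin, hcardV]; omega
  intro M hM
  rcases M.eq_empty_or_nonempty with hME | ⟨a, ha⟩
  · exact Or.inl hME
  by_cases hsing : ∃ v, M = {v}
  · exact Or.inr (Or.inl hsing)
  have hbex : ∃ b ∈ M, b ≠ a := by
    by_contra hc
    push_neg at hc
    exact hsing ⟨a, Set.eq_singleton_iff_unique_mem.mpr ⟨ha, hc⟩⟩
  obtain ⟨b, hb, hba⟩ := hbex
  refine Or.inr (Or.inr ?_)
  set Z : V ⊕ Fin (n+4) := Sum.inr ⟨n+1, by omega⟩ with hZ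
  set Y : V ⊕ Fin (n+4) := Sum.inr ⟨n+2, by omega⟩ with hY
  set Y' : V ⊕ Fin (n+4) := Sum.inr ⟨n+3, by omega⟩ with hY'
  -- Step 1 : Z ∈ M
  have hZM : Z ∈ M := by
    by_contra hZM
    rcases hM Z hZM with hall | hnone
    · have hclass : ∀ m ∈ M, (∃ k : Fin (n+4), m = Sum.inr k ∧ k.val ≤ n) ∨ m = Y := by
        rintro (v | k) hm
        · have := hall _ hm
          simp [hZ, primeExtG_adj_rl] at this <;> omega
        · have := hall _ hm
          simp only [Fin.val_mk, hZ, primeExtG_adj_rr, extraRel] at this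
          rcases Nat.lt_or_ge k.val (n+1) with hk | hk
          · exact Or.inl ⟨k, rfl, by omega⟩
          · have hv : k.val = n+2 := by omega
            right; rw [hY]; congr 1; exact Fin.ext hv
      rcases hclass a ha with ⟨k, rfl, hk⟩ | rfl <;> rcases hclass b hb with ⟨l, rfl, hl⟩ | h2
      · have hkl : k.val ≠ l.val := fun hc => hba (by rw [Fin.ext hc])
        rcases Nat.lt_or_ge k.val l.val with hlt | hge
        · have hkn : k.val < n := by omega
          set s : V ⊕ Fin (n+4) := Sum.inl (e.symm ⟨k.val, hkn⟩) with hs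
          have hsM : s ∉ M := fun hsm => by
            have := hall _ hsm
            simp [hZ, hs, primeExtG_adj_rl] at this <;> omega
          rcases hM s hsM with hall' | hnone'
          · have := hall' _ ha
            simp [hs, primeExtG_adj_lr, Equiv.apply_symm_apply] at this <;> omega
          · have := hnone' _ hb
            simp only [Fin.val_mk, hs, primeExtG_adj_lr, Equiv.apply_symm_apply] at this
            exact this ⟨hlt, hl⟩
        · have hlt' : l.val < k.val := by omega
          have hln : l.val < n := by omega
          set s : V ⊕ Fin (n+4) := Sum.inl (e.symm ⟨l.val, hln⟩) with hs
          have hsM : s ∉ M := fun hsm => by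
            have := hall _ hsm
            simp [hZ, hs, primeExtG_adj_rl] at this <;> omega
          rcases hM s hsM with hall' | hnone'
          · have := hall' _ hb
            simp [hs, primeExtG_adj_lr, Equiv.apply_symm_apply] at this <;> omega
          · have := hnone' _ ha
            simp only [Fin.val_mk, hs, primeExtG_adj_lr, Equiv.apply_symm_apply] at this
            exact this ⟨hlt', hk⟩
      · have hY'M : Y' ∉ M := fun hm => by
          have := hall _ hm
          simp [hZ, hY', primeExtG_adj_rr, extraRel] at this <;> omega
        rcases hM Y' hY'M with hall' | hnone'
        · have := hall' _ ha
          simp [hY', primeExtG_adj_rr, extraRel] at this <;> omega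
        · have := hnone' _ hb
          rw [h2] at this
          simp [hY', hY, primeExtG_adj_rr, extraRel] at this <;> omega
      · have hY'M : Y' ∉ M := fun hm => by
          have := hall _ hm
          simp [hZ, hY', primeExtG_adj_rr, extraRel] at this <;> omega
        rcases hM Y' hY'M with hall' | hnone'
        · have := hall' _ hb
          simp [hY', primeExtG_adj_rr, extraRel] at this <;> omega
        · have := hnone' _ ha
          simp [hY', hY, primeExtG_adj_rr, extraRel] at this <;> omega
      · exact hba (h2.symm ▸ rfl)
    · have hclass : ∀ m ∈ M, (∃ v : V, m = Sum.inl v) ∨ m = Y' := by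
        rintro (v | k) hm
        · exact Or.inl ⟨v, rfl⟩
        · have h1 := hnone _ hm
          simp [hZ, primeExtG_adj_rr, extraRel] at h1
          have hk4 : k.val < n + 4 := k.isLt
          have hkz : k.val ≠ n+1 := by
            intro hc
            exact hZM (by rwa [show Z = Sum.inr k from by rw [hZ]; congr 1; exact Fin.ext hc.symm])
          have hv : k.val = n+3 := by omega
          right; rw [hY']; congr 1; exact Fin.ext hv
      rcases hclass a ha with ⟨u, rfl⟩ | rfl <;> rcases hclass b hb with ⟨v, rfl⟩ | h2
      · have huv : (e u : ℕ) ≠ (e v : ℕ) := by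
          intro hc
          exact hba (by rw [show v = u from e.injective (Fin.ext hc.symm)])
        rcases Nat.lt_or_ge (e u : ℕ) (e v : ℕ) with hlt | hge
        · have h1 : (e u : ℕ) + 1 ≤ n := by have := (e v).isLt; omega
          set s : V ⊕ Fin (n+4) := Sum.inr ⟨(e u : ℕ) + 1, by omega⟩ with hs
          have hsM : s ∉ M := fun hsm => by
            have := hnone _ hsm
            simp [hZ, hs, primeExtG_adj_rr, extraRel] at this <;> omega
          rcases hM s hsM with hall' | hnone'
          · have := hall' _ hb
            simp [hs, primeExtG_adj_rl] at this <;> omega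
          · have := hnone' _ ha
            simp only [Fin.val_mk, hs, primeExtG_adj_rl] at this
            exact this ⟨by omega, h1⟩
        · have hlt' : (e v : ℕ) < (e u : ℕ) := by omega
          have h1 : (e v : ℕ) + 1 ≤ n := by have := (e u).isLt; omega
          set s : V ⊕ Fin (n+4) := Sum.inr ⟨(e v : ℕ) + 1, by omega⟩ with hs
          have hsM : s ∉ M := fun hsm => by
            have := hnone _ hsm
            simp [hZ, hs, primeExtG_adj_rr, extraRel] at this <;> omega
          rcases hM s hsM with hall' | hnone'
          · have := hall' _ ha
            simp [hs, primeExtG_adj_rl] at this <;> omega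
          · have := hnone' _ hb
            simp only [Fin.val_mk, hs, primeExtG_adj_rl] at this
            exact this ⟨by omega, h1⟩
      · have hYM : Y ∉ M := fun hm => by
          have := hnone _ hm
          simp [hZ, hY, primeExtG_adj_rr, extraRel] at this <;> omega
        rcases hM Y hYM with hall' | hnone'
        · have := hall' _ ha
          simp [hY, primeExtG_adj_rl] at this <;> omega
        · have := hnone' _ hb
          rw [h2] at this
          simp [hY, hY', primeExtG_adj_rr, extraRel] at this <;> omega
      · have hYM : Y ∉ M := fun hm => by
          have := hnone _ hm
          simp [hZ, hY, primeExtG_adj_rr, extraRel] at this <;> omega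
        rcases hM Y hYM with hall' | hnone'
        · have := hall' _ hb
          simp [hY, primeExtG_adj_rl] at this <;> omega
        · have := hnone' _ ha
          simp [hY, hY', primeExtG_adj_rr, extraRel] at this <;> omega
      · exact hba (h2.symm ▸ rfl)
  -- Step 2 : Y ∈ M
  have hYM : Y ∈ M := by
    by_contra hYM
    rcases hM Y hYM with hall | hnone
    · have hclass : ∀ m ∈ M, m = Z ∨ m = Y' := by
        rintro (v | k) hm
        · have := hall _ hm
          simp [hY, primeExtG_adj_rl] at this <;> omega
        · have := hall _ hm
          simp only [Fin.val_mk, hY, primeExtG_adj_rr, extraRel] at this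
          rcases Nat.lt_or_ge k.val (n+2) with hk | hk
          · have hv : k.val = n+1 := by omega
            left; rw [hZ]; congr 1; exact Fin.ext hv
          · have hv : k.val = n+3 := by omega
            right; rw [hY']; congr 1; exact Fin.ext hv
      have hY'M : Y' ∈ M := by
        rcases hclass a ha with rfl | rfl
        · rcases hclass b hb with rfl | rfl
          · exact absurd rfl hba
          · exact hb
        · exact ha
      set s : V ⊕ Fin (n+4) := Sum.inr ⟨0, by omega⟩ with hs
      have hsM : s ∉ M := fun hsm => by
        have := hall _ hsm
        simp [hY, hs, primeExtG_adj_rr, extraRel] at this <;> omega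
      rcases hM s hsM with hall' | hnone'
      · have := hall' _ hY'M
        simp [hs, hY', primeExtG_adj_rr, extraRel] at this <;> omega
      · have := hnone' _ hZM
        simp [hs, hZ, primeExtG_adj_rr, extraRel] at this <;> omega
    · have := hnone _ hZM
      simp [hY, hZ, primeExtG_adj_rr, extraRel] at this <;> omega
  -- Step 3 : Y' ∈ M
  have hY'M : Y' ∈ M := by
    by_contra hY'M
    rcases hM Y' hY'M with hall | hnone
    · have := hall _ hZM
      simp [hY', hZ, primeExtG_adj_rr, extraRel] at this <;> omega
    · have := hnone _ hYM
      simp [hY', hY, primeExtG_adj_rr, extraRel] at this <;> omega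
  -- Step 4 : all w's ∈ M
  have hWM : ∀ k : Fin (n+4), k.val ≤ n → Sum.inr k ∈ M := by
    intro k hk
    by_contra hkM
    rcases hM (Sum.inr k) hkM with hall | hnone
    · have := hall _ hYM
      simp [hY, primeExtG_adj_rr, extraRel] at this <;> omega
    · have := hnone _ hZM
      simp [hZ, primeExtG_adj_rr, extraRel] at this <;> omega
  -- Step 5 : all inl's ∈ M
  have hVM : ∀ v : V, Sum.inl v ∈ M := by
    intro v
    by_contra hvM
    rcases hM (Sum.inl v) hvM with hall | hnone
    · have := hall _ hZM
      simp [hZ, primeExtG_adj_lr] at this <;> omega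
    · have h1 : (e v : ℕ) + 1 ≤ n := (e v).isLt
      have := hnone _ (hWM ⟨(e v : ℕ) + 1, by omega⟩ h1)
      simp only [Fin.val_mk, primeExtG_adj_lr] at this
      exact this ⟨by omega, h1⟩
  ext x
  simp only [Fin.val_mk, Set.mem_univ, iff_true]
  rcases x with v | k
  · exact hVM v
  · have hk4 : k.val < n + 4 := k.isLt
    rcases Nat.lt_or_ge k.val (n+1) with hk | hk
    · exact hWM k (by omega)
    · rcases Nat.lt_or_ge k.val (n+2) with hk2 | hk2
      · rwa [show Sum.inr k = Z from by rw [hZ]; congr 1; exact Fin.ext (by simp only [Fin.val_mk]; omega)]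
      · rcases Nat.lt_or_ge k.val (n+3) with hk3 | hk3
        · rwa [show Sum.inr k = Y from by rw [hY]; congr 1; exact Fin.ext (by simp only [Fin.val_mk]; omega)]
        · rwa [show Sum.inr k = Y' from by rw [hY']; congr 1; exact Fin.ext (by simp only [Fin.val_mk]; omega)]

end

lemma isModule_compl {V : Type*} (G : SimpleGraph V) (M : Set V) (h : G.IsModule M) :
    Gᶜ.IsModule M := by
  intro v hv
  rcases h v hv with hall | hnone
  · right
    intro m hm hadj
    exact hadj.2 (hall m hm)
  · left
    intro m hm
    refine ⟨fun hc => hv (hc ▸ hm), hnone m hm⟩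

lemma isPrime_compl {V : Type*} [Fintype V] (H : SimpleGraph V) (h : H.IsPrimeGraph) :
    Hᶜ.IsPrimeGraph := by
  refine ⟨h.1, fun M hM => h.2 M ?_⟩
  have := isModule_compl Hᶜ M hM
  rwa [compl_compl] at this

lemma isExtension_compl {V W : Type*} (G : SimpleGraph V) (H : SimpleGraph (V ⊕ W))
    (h : G.IsExtension H) : Gᶜ.IsExtension Hᶜ := by
  intro u v
  rw [SimpleGraph.compl_adj, SimpleGraph.compl_adj, h u v]
  constructor
  · rintro ⟨h1, h2⟩
    exact ⟨fun hc => h1 (hc ▸ rfl), h2⟩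
  · rintro ⟨h1, h2⟩
    exact ⟨fun hc => h1 (Sum.inl.inj hc), h2⟩

/-- if `G` or its complement has an isolated vertex, then
`p(G) ≥ ⌈log₂(max(ι(G), ι(Ḡ)) + 1)⌉`, and its equivalent formulation on extensions. -/
theorem primeBound_lower_bound_isolated {V : Type*} [Fintype V] (G : SimpleGraph V)
    (h : 1 ≤ G.isolatedCount ∨ 1 ≤ Gᶜ.isolatedCount) :
    Nat.clog 2 (max G.isolatedCount Gᶜ.isolatedCount + 1) ≤ G.primeBound ∧
    ∀ (p : ℕ) (H : SimpleGraph (V ⊕ Fin p)), G.IsExtension H →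
      2 ^ p ≤ G.isolatedCount → ¬ H.IsPrimeGraph := by
  refine ⟨?_, fun p H hext hc => keyA G p H hext hc⟩
  have hne : {p : ℕ | ∃ H : SimpleGraph (V ⊕ Fin p), G.IsExtension H ∧ H.IsPrimeGraph}.Nonempty :=
    ⟨Fintype.card V + 4, primeExtG G (Fintype.card V) (Fintype.equivFin V),
      primeExtG_isExtension G (Fintype.card V) (Fintype.equivFin V),
      primeExtG_isPrime G (Fintype.card V) (Fintype.equivFin V)⟩
  have hmem : G.primeBound ∈
      {p : ℕ | ∃ H : SimpleGraph (V ⊕ Fin p), G.IsExtension H ∧ H.IsPrimeGraph} :=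
    Nat.sInf_mem hne
  obtain ⟨H₀, hext₀, hpr₀⟩ := hmem
  have h1 : ¬ (2 ^ G.primeBound ≤ G.isolatedCount) :=
    fun hc => keyA G _ H₀ hext₀ hc hpr₀
  have h2 : ¬ (2 ^ G.primeBound ≤ Gᶜ.isolatedCount) :=
    fun hc => keyA Gᶜ _ H₀ᶜ (isExtension_compl G H₀ hext₀) hc (isPrime_compl H₀ hpr₀)
  rw [Nat.clog_le_iff_le_pow (by norm_num : 1 < 2)]
  omega
end

section
/- For every finite graph G with max(α_M(G), ω_M(G)) ≥ 2, G admits a prime extension adding at most ⌈log₂(max(α_M(G), ω_M(G)) + 1)⌉ new vertices; that is, p(G) ≤ ⌈log₂(max(α_M(G), ω_M(G)) + 1)⌉. -/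
namespace PrimeExt

open SimpleGraph Set

universe u

variable {V : Type*}

/-- A separation: no edges between `M` and its complement. -/
def Sep (G : SimpleGraph V) (M : Set V) : Prop := ∀ a ∈ M, ∀ b ∉ M, ¬ G.Adj a b

def TwoElts (N : Set V) : Prop := ∃ u ∈ N, ∃ w ∈ N, u ≠ w

theorem twoElts_mono {N M : Set V} (h : N ⊆ M) : TwoElts N → TwoElts M := by
  rintro ⟨u, hu, w, hw, hne⟩; exact ⟨u, h hu, w, h hw, hne⟩

theorem mod_union {G : SimpleGraph V} {M N : Set V} (hM : G.IsModule M) (hN : G.IsModule N)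
    (hMN : (M ∩ N).Nonempty) : G.IsModule (M ∪ N) := by
  obtain ⟨w, hwM, hwN⟩ := hMN
  intro x hx
  have hxM : x ∉ M := fun h => hx (Or.inl h)
  have hxN : x ∉ N := fun h => hx (Or.inr h)
  rcases hM x hxM with h1 | h1 <;> rcases hN x hxN with h2 | h2
  · left; rintro y (hy | hy); exacts [h1 y hy, h2 y hy]
  · exact absurd (h1 w hwM) (h2 w hwN)
  · exact absurd (h2 w hwN) (h1 w hwM)
  · right; rintro y (hy | hy); exacts [h1 y hy, h2 y hy]

theorem mod_diff {G : SimpleGraph V} {M N : Set V} (hM : G.IsModule M) (hN : G.IsModule N)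
    (hMN : (M \ N).Nonempty) : G.IsModule (N \ M) := by
  obtain ⟨x₀, hx₀M, hx₀N⟩ := hMN
  intro x hx
  by_cases hxN : x ∈ N
  · -- then x ∈ M
    have hxM : x ∈ M := by
      by_contra hxM
      exact hx ⟨hxN, hxM⟩
    -- uniformity via x₀
    rcases hN x₀ hx₀N with h1 | h1
    · left; rintro y ⟨hyN, hyM⟩
      rcases hM y hyM with h2 | h2
      · exact (h2 x hxM).symm
      · exact absurd (h1 y hyN).symm (h2 x₀ hx₀M)
    · right; rintro y ⟨hyN, hyM⟩ hadj
      rcases hM y hyM with h2 | h2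
      · exact h1 y hyN ((h2 x₀ hx₀M).symm)
      · exact h2 x hxM hadj.symm
  · rcases hN x hxN with h1 | h1
    · left; rintro y ⟨hyN, _⟩; exact h1 y hyN
    · right; rintro y ⟨hyN, _⟩; exact h1 y hyN

theorem dichotomy {G : SimpleGraph V} {M : Set V} (hM : G.IsModule M) (hMc : G.IsModule Mᶜ) :
    Sep G M ∨ (∀ a ∈ M, ∀ b ∉ M, G.Adj a b) := by
  by_cases h : ∃ a ∈ M, ∃ b ∉ M, G.Adj a b
  · right
    obtain ⟨a₀, ha₀, b₀, hb₀, hadj⟩ := h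
    have hb₀all : ∀ a ∈ M, G.Adj b₀ a := by
      rcases hM b₀ hb₀ with h1 | h1
      · exact h1
      · exact absurd hadj.symm (h1 a₀ ha₀)
    intro a ha b hb
    rcases hMc a (by simpa using ha) with h1 | h1
    · exact h1 b hb
    · exact absurd (hb₀all a ha).symm (h1 b₀ hb₀)
  · left
    intro a ha b hb hadj
    exact h ⟨a, ha, b, hb, hadj⟩

theorem pair_module_of_clique {G : SimpleGraph V} {C : Set V} (hC : G.IsModule C)
    (hcl : G.IsClique C) {a b : V} (ha : a ∈ C) (hb : b ∈ C) :
    G.IsModule {a, b} := by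
  intro x hx
  have hxa : x ≠ a := fun h => hx (by simp [h])
  have hxb : x ≠ b := fun h => hx (by simp [h])
  by_cases hxC : x ∈ C
  · left; rintro m (rfl | rfl)
    · exact hcl hxC ha hxa
    · exact hcl hxC hb hxb
  · rcases hC x hxC with h1 | h1
    · left; rintro m (rfl | rfl); exacts [h1 _ ha, h1 _ hb]
    · right; rintro m (rfl | rfl); exacts [h1 _ ha, h1 _ hb]

theorem not_isolated_and_universal {G : SimpleGraph V} (hcard : TwoElts (Set.univ : Set V))
    {i u : V} (hi : ∀ w, ¬ G.Adj i w) (hu : ∀ w, w ≠ u → G.Adj u w) : False := by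
  by_cases h : i = u
  · subst h
    obtain ⟨a, -, b, -, hne⟩ := hcard
    rcases eq_or_ne a i with rfl | ha
    · exact hi b (hu b (Ne.symm hne))
    · exact hi a (hu a ha)
  · exact hi u (hu i h).symm

/-- A coloring such that no module with at least two elements is monochromatic. -/
def MFree (G : SimpleGraph V) (c : V → ℕ) : Prop :=
  ∀ N : Set V, G.IsModule N → TwoElts N → ∃ u ∈ N, ∃ w ∈ N, c u ≠ c w

/-- All clique or stable modules have at most `s` elements. -/
def MBound (G : SimpleGraph V) (s : ℕ) : Prop :=
  ∀ N : Set V, G.IsModule N → (G.IsClique N ∨ Gᶜ.IsClique N) → N.ncard ≤ s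


theorem mod_compl {G : SimpleGraph V} {M : Set V} (h : G.IsModule M) : Gᶜ.IsModule M := by
  intro v hv
  rcases h v hv with h1 | h1
  · right; intro m hm hc
    exact hc.2 (h1 m hm)
  · left; intro m hm
    refine ⟨?_, h1 m hm⟩
    rintro rfl; exact hv hm

theorem mod_compl_iff {G : SimpleGraph V} {M : Set V} : G.IsModule M ↔ Gᶜ.IsModule M :=
  ⟨mod_compl, fun h => by simpa using mod_compl h⟩

theorem mod_restrict {G : SimpleGraph V} {M N : Set V} (hN : G.IsModule N) :
    (G.induce M).IsModule (Subtype.val ⁻¹' N) := by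
  intro x hx
  rcases hN ↑x hx with h1 | h1
  · left; intro m hm; exact h1 ↑m hm
  · right; intro m hm; exact h1 ↑m hm

theorem mod_lift_of_module {G : SimpleGraph V} {M : Set V} {N : Set ↑M}
    (hM : G.IsModule M) (hN : (G.induce M).IsModule N) : G.IsModule (Subtype.val '' N) := by
  intro x hx
  by_cases hxM : x ∈ M
  · have hxN : (⟨x, hxM⟩ : ↑M) ∉ N := fun h => hx ⟨⟨x, hxM⟩, h, rfl⟩
    rcases hN _ hxN with h1 | h1
    · left; rintro y ⟨m, hm, rfl⟩; exact h1 m hm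
    · right; rintro y ⟨m, hm, rfl⟩; exact h1 m hm
  · rcases hM x hxM with h1 | h1
    · left; rintro y ⟨m, hm, rfl⟩; exact h1 ↑m m.2
    · right; rintro y ⟨m, hm, rfl⟩; exact h1 ↑m m.2

theorem mod_lift_of_sep {G : SimpleGraph V} {M : Set V} {N : Set ↑M}
    (hM : Sep G M) (hN : (G.induce M).IsModule N) : G.IsModule (Subtype.val '' N) := by
  intro x hx
  by_cases hxM : x ∈ M
  · have hxN : (⟨x, hxM⟩ : ↑M) ∉ N := fun h => hx ⟨⟨x, hxM⟩, h, rfl⟩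
    rcases hN _ hxN with h1 | h1
    · left; rintro y ⟨m, hm, rfl⟩; exact h1 m hm
    · right; rintro y ⟨m, hm, rfl⟩; exact h1 m hm
  · right; rintro y ⟨m, hm, rfl⟩
    intro hadj
    exact hM ↑m m.2 x hxM hadj.symm

theorem clique_lift {G : SimpleGraph V} {M : Set V} {N : Set ↑M}
    (h : (G.induce M).IsClique N) : G.IsClique (Subtype.val '' N) := by
  rintro x ⟨p, hp, rfl⟩ y ⟨q, hq, rfl⟩ hne
  have hpq : p ≠ q := fun h' => hne (by rw [h'])
  exact h hp hq hpq

theorem cliquec_lift {G : SimpleGraph V} {M : Set V} {N : Set ↑M}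
    (h : (G.induce M)ᶜ.IsClique N) : Gᶜ.IsClique (Subtype.val '' N) := by
  rintro x ⟨p, hp, rfl⟩ y ⟨q, hq, rfl⟩ hne
  have hpq : p ≠ q := fun h' => hne (by rw [h'])
  have := h hp hq hpq
  rw [SimpleGraph.compl_adj] at this ⊢
  exact ⟨hne, this.2⟩

theorem MBound_compl {G : SimpleGraph V} {s : ℕ} (h : MBound G s) : MBound Gᶜ s := by
  intro N hN hcl
  refine h N (mod_compl_iff.mpr hN) ?_
  rcases hcl with h1 | h1
  · exact Or.inr h1
  · left; rwa [compl_compl] at h1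

theorem MFree_compl {G : SimpleGraph V} {c : V → ℕ} (h : MFree Gᶜ c) : MFree G c :=
  fun N hN ht => h N (mod_compl hN) ht

theorem MBound_induce_of_module {G : SimpleGraph V} {M : Set V} {s : ℕ}
    (hM : G.IsModule M) (hb : MBound G s) : MBound (G.induce M) s := by
  intro N hN hcl
  have key : (Subtype.val '' N).ncard ≤ s := by
    refine hb _ (mod_lift_of_module hM hN) ?_
    rcases hcl with h | h
    · exact Or.inl (clique_lift h)
    · exact Or.inr (cliquec_lift h)
  rwa [Set.ncard_image_of_injective _ Subtype.val_injective] at key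

theorem MBound_induce_of_sep {G : SimpleGraph V} {M : Set V} {s : ℕ}
    (hM : Sep G M) (hb : MBound G s) : MBound (G.induce M) s := by
  intro N hN hcl
  have key : (Subtype.val '' N).ncard ≤ s := by
    refine hb _ (mod_lift_of_sep hM hN) ?_
    rcases hcl with h | h
    · exact Or.inl (clique_lift h)
    · exact Or.inr (cliquec_lift h)
  rwa [Set.ncard_image_of_injective _ Subtype.val_injective] at key


theorem nontrivial_of_two_le_card [Finite V] (h : 2 ≤ Nat.card V) : Nontrivial V := by
  cases nonempty_fintype V
  rw [Nat.card_eq_fintype_card] at h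
  exact Fintype.one_lt_card_iff_nontrivial.mp h



/-- Induction hypothesis package. -/
def IHtype (n : ℕ) : Prop :=
  ∀ (W : Type u) [Finite W] (G : SimpleGraph W), Nat.card W ≤ n →
    ∀ s : ℕ, 2 ≤ s → MBound G s → ∃ c : W → ℕ, (∀ v, c v < s) ∧ MFree G c

variable {n s : ℕ}

theorem card_coe_lt {V : Type u} [Finite V] {M : Set V} (x : V) (hx : x ∉ M) :
    Nat.card ↑M < Nat.card V := by
  rw [Nat.card_coe_set_eq, ← Set.ncard_univ]
  exact Set.ncard_lt_ncard (Set.ssubset_univ_iff.mpr fun h => hx (h ▸ Set.mem_univ x))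
      (Set.toFinite _)

theorem step_iso {V : Type u} [Finite V] (IH : IHtype.{u} n) (G : SimpleGraph V)
    (hcard : Nat.card V ≤ n + 1) (hs : 2 ≤ s) (hb : MBound G s)
    (hI : ∃ v, ∀ w, ¬ G.Adj v w) :
    ∃ c : V → ℕ, (∀ v, c v < s) ∧ MFree G c := by
  classical
  set I : Set V := {v | ∀ w, ¬ G.Adj v w} with hIdef
  obtain ⟨v₀, hv₀⟩ := hI
  have hv₀I : v₀ ∈ I := hv₀
  have hImod : G.IsModule I := by
    intro x hx
    right; intro m hm hadj
    exact hm x hadj.symm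
  have hIcl : Gᶜ.IsClique I := by
    intro a ha b hb' hne
    exact (SimpleGraph.compl_adj G a b).mpr ⟨hne, ha b⟩
  have hIcard : I.ncard ≤ s := hb I hImod (Or.inr hIcl)
  have hIcard' : Nat.card ↑I ≤ s := by rwa [Nat.card_coe_set_eq]
  by_cases hIu : I = Set.univ
  · -- all vertices isolated; injective coloring
    have hVs : Nat.card V ≤ s := by
      rw [← Set.ncard_univ, ← hIu]; exact hIcard
    let e := Finite.equivFin V
    refine ⟨fun v => (e v : ℕ), fun v => lt_of_lt_of_le (e v).2 hVs, ?_⟩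
    rintro N hN ⟨u, hu, w, hw, hne⟩
    refine ⟨u, hu, w, hw, fun h => hne (e.injective (Fin.val_injective h))⟩
  · -- recurse on the non-isolated part
    have hsep : Sep G Iᶜ := by
      intro a ha b hb' hadj
      have hbI : b ∈ I := not_not.mp hb'
      exact hbI a hadj.symm
    have hcard2 : Nat.card ↑(Iᶜ) ≤ n := by
      have := card_coe_lt (M := Iᶜ) v₀ (fun h => h hv₀I)
      omega
    obtain ⟨c₁, hc₁, hf₁⟩ := IH ↑(Iᶜ) (G.induce Iᶜ) hcard2 s hs (MBound_induce_of_sep hsep hb)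
    let eI := Finite.equivFin ↑I
    refine ⟨fun v => if h : v ∈ I then (eI ⟨v, h⟩ : ℕ) else c₁ ⟨v, h⟩, ?_, ?_⟩
    · intro v
      by_cases h : v ∈ I
      · simp only [dif_pos h]
        exact lt_of_lt_of_le (eI ⟨v, h⟩).2 hIcard'
      · simp only [dif_neg h]
        exact hc₁ _
    · rintro N hN ⟨u, hu, w, hw, hne⟩
      by_cases hNI : ∃ z ∈ N, z ∈ I
      · obtain ⟨z, hzN, hzI⟩ := hNI
        have hext : ∀ x ∉ N, ∀ y ∈ N, ¬ G.Adj x y := by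
          intro x hx
          rcases hN x hx with h1 | h1
          · intro y hy hadj
            exact hzI x (h1 z hzN).symm
          · exact h1
        by_cases hsub : N ⊆ I
        · refine ⟨u, hu, w, hw, ?_⟩
          have hu' := hsub hu
          have hw' := hsub hw
          simp only [dif_pos hu', dif_pos hw']
          intro h
          exact hne (congrArg Subtype.val (eI.injective (Fin.val_injective h)))
        · obtain ⟨v, hvN, hvI⟩ := Set.not_subset.mp hsub
          obtain ⟨y, hy⟩ := not_forall.mp hvI
          have hadj : G.Adj v y := not_not.mp hy
          have hyN : y ∈ N := by
            by_contra hyN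
            exact hext y hyN v hvN hadj.symm
          have hyI : y ∉ I := fun h => h v hadj.symm
          have hN₂ : G.IsModule (N ∩ Iᶜ) := by
            intro x hx
            by_cases hxI : x ∈ I
            · right; intro m hm hadj'
              exact hxI m hadj'
            · have hxN : x ∉ N := fun h => hx ⟨h, hxI⟩
              right; intro m hm
              exact hext x hxN m hm.1
          have hres := mod_restrict (G := G) (M := Iᶜ) hN₂
          have htwo : TwoElts (Subtype.val ⁻¹' (N ∩ Iᶜ) : Set ↑(Iᶜ)) := by
            refine ⟨⟨v, hvI⟩, ⟨hvN, hvI⟩, ⟨y, hyI⟩, ⟨hyN, hyI⟩, ?_⟩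
            intro h
            exact G.ne_of_adj hadj (congrArg Subtype.val h)
          obtain ⟨p, hp, q, hq, hpq⟩ := hf₁ _ hres htwo
          refine ⟨↑p, hp.1, ↑q, hq.1, ?_⟩
          have h1 : ↑p ∉ I := p.2
          have h2 : ↑q ∉ I := q.2
          simp only [dif_neg h1, dif_neg h2]
          intro h
          exact hpq (by simpa using h)
      · -- N inside the non-isolated part
        have hNsub : N ⊆ Iᶜ := fun z hz hzi => hNI ⟨z, hz, hzi⟩
        have hres := mod_restrict (G := G) (M := Iᶜ) hN
        have htwo : TwoElts (Subtype.val ⁻¹' N : Set ↑(Iᶜ)) := by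
          refine ⟨⟨u, hNsub hu⟩, hu, ⟨w, hNsub hw⟩, hw, ?_⟩
          intro h
          exact hne (congrArg Subtype.val h)
        obtain ⟨p, hp, q, hq, hpq⟩ := hf₁ _ hres htwo
        refine ⟨↑p, hp, ↑q, hq, ?_⟩
        have h1 : ↑p ∉ I := p.2
        have h2 : ↑q ∉ I := q.2
        simp only [dif_neg h1, dif_neg h2]
        intro h
        exact hpq (by simpa using h)

theorem step_sep {V : Type u} [Finite V] (IH : IHtype.{u} n) (G : SimpleGraph V)
    (hcard : Nat.card V ≤ n + 1) (hs : 2 ≤ s) (hb : MBound G s)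
    (hniso : ∀ v : V, ∃ w, G.Adj v w)
    (hsep : ∃ M : Set V, M.Nonempty ∧ Mᶜ.Nonempty ∧ Sep G M) :
    ∃ c : V → ℕ, (∀ v, c v < s) ∧ MFree G c := by
  classical
  obtain ⟨M, ⟨m₀, hm₀⟩, ⟨w₀, hw₀⟩, hsepM⟩ := hsep
  have hsepMc : Sep G Mᶜ := fun a ha b hb' hadj => hsepM b (not_not.mp hb') a ha hadj.symm
  have hcM : Nat.card ↑M ≤ n := by
    have := card_coe_lt (M := M) w₀ hw₀
    omega
  have hcMc : Nat.card ↑(Mᶜ) ≤ n := by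
    have := card_coe_lt (M := Mᶜ) m₀ (fun h => h hm₀)
    omega
  obtain ⟨c₁, hc₁, hf₁⟩ := IH ↑M (G.induce M) hcM s hs (MBound_induce_of_sep hsepM hb)
  obtain ⟨c₂, hc₂, hf₂⟩ := IH ↑(Mᶜ) (G.induce Mᶜ) hcMc s hs (MBound_induce_of_sep hsepMc hb)
  refine ⟨fun v => if h : v ∈ M then c₁ ⟨v, h⟩ else c₂ ⟨v, h⟩, ?_, ?_⟩
  · intro v
    by_cases h : v ∈ M
    · simp only [dif_pos h]; exact hc₁ _
    · simp only [dif_neg h]; exact hc₂ _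
  · rintro N hN htwo
    by_cases hcross : (∃ a ∈ N, a ∈ M) ∧ (∃ b ∈ N, b ∉ M)
    · obtain ⟨⟨a, haN, haM⟩, ⟨b, hbN, hbM⟩⟩ := hcross
      have hext : ∀ x ∉ N, ∀ y ∈ N, ¬ G.Adj x y := by
        intro x hx
        rcases hN x hx with h1 | h1
        · by_cases hxM : x ∈ M
          · exact absurd (h1 b hbN) (hsepM x hxM b hbM)
          · intro y hy hadj
            exact hsepM a haM x hxM (h1 a haN).symm
        · exact h1
      obtain ⟨y, hay⟩ := hniso a
      have hyN : y ∈ N := by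
        by_contra hyN
        exact hext y hyN a haN hay.symm
      have hyM : y ∈ M := by
        by_contra hyM
        exact hsepM a haM y hyM hay
      have hN₁ : G.IsModule (N ∩ M) := by
        intro x hx
        by_cases hxM : x ∈ M
        · have hxN : x ∉ N := fun h => hx ⟨h, hxM⟩
          right; intro m hm; exact hext x hxN m hm.1
        · right; intro m hm hadj
          exact hsepM m hm.2 x hxM hadj.symm
      have hres := mod_restrict (G := G) (M := M) hN₁
      have htwo' : TwoElts (Subtype.val ⁻¹' (N ∩ M) : Set ↑M) := by
        refine ⟨⟨a, haM⟩, ⟨haN, haM⟩, ⟨y, hyM⟩, ⟨hyN, hyM⟩, ?_⟩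
        intro h
        exact G.ne_of_adj hay (congrArg Subtype.val h)
      obtain ⟨p, hp, q, hq, hpq⟩ := hf₁ _ hres htwo'
      refine ⟨↑p, hp.1, ↑q, hq.1, ?_⟩
      simp only [dif_pos p.2, dif_pos q.2]
      intro h
      exact hpq (by simpa using h)
    · rw [not_and_or] at hcross
      rcases hcross with h | h
      · -- N ⊆ Mᶜ
        have hNsub : ∀ z ∈ N, z ∉ M := by
          intro z hz hzM; exact h ⟨z, hz, hzM⟩
        have hres := mod_restrict (G := G) (M := Mᶜ) hN
        obtain ⟨u, hu, w, hw, hne⟩ := htwo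
        have htwo' : TwoElts (Subtype.val ⁻¹' N : Set ↑(Mᶜ)) :=
          ⟨⟨u, hNsub u hu⟩, hu, ⟨w, hNsub w hw⟩, hw, fun h' => hne (congrArg Subtype.val h')⟩
        obtain ⟨p, hp, q, hq, hpq⟩ := hf₂ _ hres htwo'
        refine ⟨↑p, hp, ↑q, hq, ?_⟩
        have h1 : (↑p : V) ∉ M := p.2
        have h2 : (↑q : V) ∉ M := q.2
        simp only [dif_neg h1, dif_neg h2]
        intro h'
        exact hpq (by simpa using h')
      · -- N ⊆ M
        have hNsub : ∀ z ∈ N, z ∈ M := by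
          intro z hz
          by_contra hzM
          exact h ⟨z, hz, hzM⟩
        have hres := mod_restrict (G := G) (M := M) hN
        obtain ⟨u, hu, w, hw, hne⟩ := htwo
        have htwo' : TwoElts (Subtype.val ⁻¹' N : Set ↑M) :=
          ⟨⟨u, hNsub u hu⟩, hu, ⟨w, hNsub w hw⟩, hw, fun h' => hne (congrArg Subtype.val h')⟩
        obtain ⟨p, hp, q, hq, hpq⟩ := hf₁ _ hres htwo'
        refine ⟨↑p, hp, ↑q, hq, ?_⟩
        simp only [dif_pos p.2, dif_pos q.2]
        intro h'
        exact hpq (by simpa using h')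


theorem theta_aux : ∀ n : ℕ, IHtype.{u} n := by
  intro n
  induction n with
  | zero =>
    intro W _ G hcard s hs hb
    refine ⟨fun _ => 0, fun _ => by show (0:ℕ) < s; omega, ?_⟩
    rintro N hN ⟨u, hu, w, hw, hne⟩
    exfalso
    have h0 : Nat.card W = 0 := by omega
    have : IsEmpty W := by
      rcases Nat.card_eq_zero.mp h0 with h | h
      · exact h
      · exact absurd ‹Finite W› h.not_finite
    exact this.false u
  | succ n IH =>
    intro W _ G hcard s hs hb
    classical
    by_cases htriv : Nat.card W ≤ 1
    · refine ⟨fun _ => 0, fun _ => by show (0:ℕ) < s; omega, ?_⟩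
      rintro N hN ⟨u, hu, w, hw, hne⟩
      exfalso
      have hp : ({u, w} : Set W).ncard = 2 := Set.ncard_pair hne
      have hle : ({u, w} : Set W).ncard ≤ (Set.univ : Set W).ncard :=
        Set.ncard_le_ncard (Set.subset_univ _) (Set.toFinite _)
      rw [Set.ncard_univ] at hle
      omega
    push_neg at htriv
    by_cases hiso : ∃ v, ∀ w', ¬ G.Adj v w'
    · exact step_iso IH G hcard hs hb hiso
    by_cases huniv : ∃ v, ∀ w', ¬ Gᶜ.Adj v w'
    · obtain ⟨c, h1, h2⟩ := step_iso IH Gᶜ hcard hs (MBound_compl hb) huniv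
      exact ⟨c, h1, MFree_compl h2⟩
    push_neg at hiso huniv
    by_cases hsep : ∃ M : Set W, M.Nonempty ∧ Mᶜ.Nonempty ∧ Sep G M
    · exact step_sep IH G hcard hs hb hiso hsep
    by_cases hsepc : ∃ M : Set W, M.Nonempty ∧ Mᶜ.Nonempty ∧ Sep Gᶜ M
    · obtain ⟨c, h1, h2⟩ := step_sep IH Gᶜ hcard hs (MBound_compl hb) huniv hsepc
      exact ⟨c, h1, MFree_compl h2⟩
    by_cases hprop : ∃ N : Set W, G.IsModule N ∧ N ≠ Set.univ ∧ TwoElts N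
    · -- maximal proper modules
      classical
      obtain ⟨N₀, hN₀mod, hN₀nu, hN₀two⟩ := hprop
      set 𝓜 : Set (Set W) := {M | G.IsModule M ∧ M ≠ Set.univ ∧ TwoElts M ∧
        ∀ P, G.IsModule P → P ≠ Set.univ → M ⊆ P → M = P} with h𝓜
      have hdisj : ∀ M₁, M₁ ∈ 𝓜 → ∀ M₂, M₂ ∈ 𝓜 → ∀ v, v ∈ M₁ → v ∈ M₂ → M₁ = M₂ := by
        intro M₁ hM₁ M₂ hM₂ v hv₁ hv₂
        by_contra hne12
        obtain ⟨hmod₁, hnu₁, htwo₁, hmax₁⟩ := hM₁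
        obtain ⟨hmod₂, hnu₂, htwo₂, hmax₂⟩ := hM₂
        have hUmod : G.IsModule (M₁ ∪ M₂) := mod_union hmod₁ hmod₂ ⟨v, hv₁, hv₂⟩
        have hne21 : M₂ ≠ M₁ := fun h => hne12 h.symm
        have h12 : ¬ M₁ ⊆ M₂ := fun h => hne12 (hmax₁ M₂ hmod₂ hnu₂ h)
        have h21 : ¬ M₂ ⊆ M₁ := fun h => hne21 (hmax₂ M₁ hmod₁ hnu₁ h)
        obtain ⟨x₀, hx₀1, hx₀2⟩ := Set.not_subset.mp h12
        obtain ⟨y₀, hy₀2, hy₀1⟩ := Set.not_subset.mp h21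
        by_cases hU : M₁ ∪ M₂ = Set.univ
        · have hK : G.IsModule (M₂ \ M₁) := mod_diff hmod₁ hmod₂ ⟨x₀, hx₀1, hx₀2⟩
          have hKc : M₂ \ M₁ = M₁ᶜ := by
            ext z
            constructor
            · rintro ⟨hz2, hz1⟩; exact hz1
            · intro hz
              have hz' : z ∈ M₁ ∪ M₂ := hU ▸ Set.mem_univ z
              rcases hz' with h | h
              · exact absurd h hz
              · exact ⟨h, hz⟩
          rw [hKc] at hK
          rcases dichotomy hmod₁ hK with hd | hd
          · exact hsep ⟨M₁, ⟨v, hv₁⟩, ⟨y₀, hy₀1⟩, hd⟩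
          · refine hsepc ⟨M₁, ⟨v, hv₁⟩, ⟨y₀, hy₀1⟩, ?_⟩
            intro a ha b hb' hadj
            rw [SimpleGraph.compl_adj] at hadj
            exact hadj.2 (hd a ha b hb')
        · have heq : M₁ = M₁ ∪ M₂ := hmax₁ _ hUmod hU Set.subset_union_left
          have : M₂ ⊆ M₁ := by rw [heq]; exact Set.subset_union_right
          exact h21 this
      have hext𝓜 : ∀ N : Set W, G.IsModule N → N ≠ Set.univ → TwoElts N → ∃ M ∈ 𝓜, N ⊆ M := by
        intro N hmod hnu htwo
        obtain ⟨M, hMmem, hMmax⟩ := Set.Finite.exists_maximalFor id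
          {P : Set W | G.IsModule P ∧ P ≠ Set.univ ∧ N ⊆ P} (Set.toFinite _)
          ⟨N, hmod, hnu, subset_rfl⟩
        obtain ⟨hm1, hm2, hm3⟩ := hMmem
        refine ⟨M, ⟨hm1, hm2, twoElts_mono hm3 htwo, ?_⟩, hm3⟩
        intro P hP1 hP2 hP3
        exact Set.Subset.antisymm hP3 (hMmax (j := P) ⟨hP1, hP2, hm3.trans hP3⟩ hP3)
      have hcol : ∀ M : Set W, ∃ cM : ↑M → ℕ, M ∈ 𝓜 →
          (∀ x, cM x < s) ∧ MFree (G.induce M) cM := by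
        intro M
        by_cases hM : M ∈ 𝓜
        · obtain ⟨hmod, hnu, htwo, -⟩ := hM
          obtain ⟨x₀, hx₀⟩ := (Set.ne_univ_iff_exists_notMem M).mp hnu
          have hcM : Nat.card ↑M ≤ n := by
            have := card_coe_lt (M := M) x₀ hx₀
            omega
          obtain ⟨cM, h1, h2⟩ := IH ↑M (G.induce M) hcM s hs
            (MBound_induce_of_module hmod hb)
          exact ⟨cM, fun _ => ⟨h1, h2⟩⟩
        · exact ⟨fun _ => 0, fun h => absurd h hM⟩
      choose f hf using hcol
      have fcongr : ∀ (M₁ M₂ : Set W), M₁ = M₂ → ∀ (v : W) (hv₁ : v ∈ M₁) (hv₂ : v ∈ M₂),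
          f M₁ ⟨v, hv₁⟩ = f M₂ ⟨v, hv₂⟩ := by
        rintro M₁ M₂ rfl v hv₁ hv₂; rfl
      set c : W → ℕ := fun v =>
        if h : ∃ M, M ∈ 𝓜 ∧ v ∈ M then f h.choose ⟨v, h.choose_spec.2⟩ else 0 with hc
      have hceval : ∀ (M : Set W) (hM : M ∈ 𝓜) (v : W) (hv : v ∈ M), c v = f M ⟨v, hv⟩ := by
        intro M hM v hv
        have h : ∃ M', M' ∈ 𝓜 ∧ v ∈ M' := ⟨M, hM, hv⟩
        rw [hc]
        simp only [dif_pos h]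
        exact fcongr _ _ (hdisj _ h.choose_spec.1 _ hM v h.choose_spec.2 hv) v _ hv
      refine ⟨c, ?_, ?_⟩
      · intro v
        rw [hc]
        by_cases h : ∃ M, M ∈ 𝓜 ∧ v ∈ M
        · simp only [dif_pos h]
          exact (hf h.choose h.choose_spec.1).1 _
        · simp only [dif_neg h]
          omega
      · intro N hN htwo
        by_cases hNu : N = Set.univ
        · obtain ⟨M₀, hM₀, -⟩ := hext𝓜 N₀ hN₀mod hN₀nu hN₀two
          obtain ⟨u, hu, w, hw, hne⟩ := hM₀.2.2.1
          have hUmod : (G.induce M₀).IsModule Set.univ := fun x hx => absurd (Set.mem_univ x) hx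
          obtain ⟨p, -, q, -, hpq⟩ := (hf M₀ hM₀).2 Set.univ hUmod
            ⟨⟨u, hu⟩, trivial, ⟨w, hw⟩, trivial, fun h => hne (congrArg Subtype.val h)⟩
          refine ⟨↑p, by rw [hNu]; trivial, ↑q, by rw [hNu]; trivial, ?_⟩
          rw [hceval M₀ hM₀ ↑p p.2, hceval M₀ hM₀ ↑q q.2]
          exact hpq
        · obtain ⟨M, hM, hNM⟩ := hext𝓜 N hN hNu htwo
          have hres : (G.induce M).IsModule (Subtype.val ⁻¹' N) := mod_restrict hN
          obtain ⟨u, hu, w, hw, hne⟩ := htwo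
          have htwo' : TwoElts (Subtype.val ⁻¹' N : Set ↑M) :=
            ⟨⟨u, hNM hu⟩, hu, ⟨w, hNM hw⟩, hw, fun h => hne (congrArg Subtype.val h)⟩
          obtain ⟨p, hp, q, hq, hpq⟩ := (hf M hM).2 _ hres htwo'
          refine ⟨↑p, hp, ↑q, hq, ?_⟩
          rw [hceval M hM ↑p p.2, hceval M hM ↑q q.2]
          exact hpq
    · -- no proper module with two elements
      have hnt : Nontrivial W := nontrivial_of_two_le_card htriv
      obtain ⟨v₀⟩ : Nonempty W := inferInstance
      refine ⟨fun v => if v = v₀ then 0 else 1, ?_, ?_⟩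
      · intro v
        show (if v = v₀ then 0 else 1) < s
        split <;> omega
      intro N hN htwo
      have hNu : N = Set.univ := by
        by_contra h
        exact hprop ⟨N, hN, h, htwo⟩
      subst hNu
      obtain ⟨w, hw⟩ := exists_ne v₀
      exact ⟨v₀, trivial, w, trivial, by simp [hw]⟩


theorem theta_main (W : Type u) [Finite W] (G : SimpleGraph W) (s : ℕ) (hs : 2 ≤ s)
    (hb : MBound G s) : ∃ c : W → ℕ, (∀ v, c v < s) ∧ MFree G c :=
  theta_aux (Nat.card W) W G le_rfl s hs hb


variable {k : ℕ}

def bits (k : ℕ) (n : ℕ) : Finset (Fin k) := Finset.univ.filter fun i => n.testBit (i : ℕ)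

theorem mem_bits {n : ℕ} {i : Fin k} : i ∈ bits k n ↔ n.testBit (i : ℕ) = true := by
  simp [bits]

theorem bits_inj {m n : ℕ} (hm : m < 2 ^ k) (hn : n < 2 ^ k) (h : bits k m = bits k n) :
    m = n := by
  refine Nat.eq_of_testBit_eq fun i => ?_
  by_cases hik : i < k
  · have h2 := Finset.ext_iff.mp h ⟨i, hik⟩
    rw [mem_bits, mem_bits] at h2
    exact Bool.eq_iff_iff.mpr h2
  · have h1 : m.testBit i = false :=
      Nat.testBit_lt_two_pow (lt_of_lt_of_le hm (Nat.pow_le_pow_right (by norm_num) (by omega)))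
    have h2 : n.testBit i = false :=
      Nat.testBit_lt_two_pow (lt_of_lt_of_le hn (Nat.pow_le_pow_right (by norm_num) (by omega)))
    rw [h1, h2]

theorem bits_two_pow {i : Fin k} : bits k (2 ^ (i : ℕ)) = {i} := by
  ext j
  rw [mem_bits, Finset.mem_singleton, Nat.testBit_two_pow]
  simp [Fin.ext_iff, eq_comm]

theorem bits_ne_empty {n : ℕ} (h0 : n ≠ 0) (hn : n < 2 ^ k) : bits k n ≠ ∅ := by
  intro h
  apply h0
  refine Nat.eq_of_testBit_eq fun i => ?_
  rw [Nat.zero_testBit]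
  by_cases hik : i < k
  · by_contra htb
    have hmem : (⟨i, hik⟩ : Fin k) ∈ bits k n := by
      rw [mem_bits]
      simpa using htb
    rw [h] at hmem
    exact absurd hmem (Finset.notMem_empty _)
  · exact Nat.testBit_lt_two_pow (lt_of_lt_of_le hn (Nat.pow_le_pow_right (by norm_num)
      (by omega)))

/-- The palette: the binary encoding of `j+1`, with the excluded set `E₀` replaced by `∅`. -/
def pal (k : ℕ) (E₀ : Finset (Fin k)) (j : ℕ) : Finset (Fin k) :=
  if bits k (j + 1) = E₀ then ∅ else bits k (j + 1)

theorem pal_inj {E₀ : Finset (Fin k)} {j₁ j₂ : ℕ} (h1 : j₁ + 1 < 2 ^ k) (h2 : j₂ + 1 < 2 ^ k)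
    (h : pal k E₀ j₁ = pal k E₀ j₂) : j₁ = j₂ := by
  unfold pal at h
  split_ifs at h with hf1 hf2 hf2
  · have := bits_inj h1 h2 (hf1.trans hf2.symm)
    omega
  · exact absurd h.symm (bits_ne_empty (by omega) h2)
  · exact absurd h (bits_ne_empty (by omega) h1)
  · have := bits_inj h1 h2 h
    omega

theorem pal_ne_E₀ {E₀ : Finset (Fin k)} {j : ℕ} (hj : j + 1 < 2 ^ k) : pal k E₀ j ≠ E₀ := by
  unfold pal
  split_ifs with hf
  · rw [← hf]
    intro h
    exact bits_ne_empty (by omega) hj h.symm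
  · exact hf

theorem pal_eq_singleton {E₀ : Finset (Fin k)} {i : Fin k} (hik : 2 ^ (i : ℕ) < 2 ^ k)
    (hE₀ : ({i} : Finset (Fin k)) ≠ E₀) : pal k E₀ (2 ^ (i : ℕ) - 1) = {i} := by
  unfold pal
  have hpow : 0 < 2 ^ (i : ℕ) := Nat.two_pow_pos _
  have h1 : 2 ^ (i : ℕ) - 1 + 1 = 2 ^ (i : ℕ) := by omega
  rw [h1, bits_two_pow]
  rw [if_neg hE₀]

theorem pal_eq_empty {E₀ : Finset (Fin k)} {j : ℕ} (hj : j + 1 < 2 ^ k)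
    (h : pal k E₀ j = ∅) : E₀ = bits k (j + 1) := by
  unfold pal at h
  split_ifs at h with hf
  · exact hf.symm
  · exact absurd h (bits_ne_empty (by omega) hj)

theorem pal_eq_univ {E₀ : Finset (Fin k)} {j : ℕ} (hk : 0 < k)
    (h : pal k E₀ j = Finset.univ) : E₀ ≠ Finset.univ := by
  unfold pal at h
  split_ifs at h with hf
  · exfalso
    have : (⟨0, hk⟩ : Fin k) ∈ (∅ : Finset (Fin k)) := h ▸ Finset.mem_univ _
    exact absurd this (Finset.notMem_empty _)
  · intro hh
    exact hf (h.trans hh.symm)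



/-- The extension graph: `G` on the `inl` part, no edges inside the `inr` part,
and `inl v ~ inr i` iff `i ∈ c v`. -/
def ExtGraph (G : SimpleGraph V) {k : ℕ} (c : V → Finset (Fin k)) :
    SimpleGraph (V ⊕ Fin k) where
  Adj x y := match x, y with
    | Sum.inl u, Sum.inl v => G.Adj u v
    | Sum.inl u, Sum.inr i => i ∈ c u
    | Sum.inr i, Sum.inl u => i ∈ c u
    | Sum.inr _, Sum.inr _ => False
  symm := by
    constructor
    rintro (u | i) (v | j) h
    · exact h.symm
    · exact h
    · exact h
    · exact h.elim
  loopless := by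
    constructor
    rintro (u | i) h
    · exact G.loopless.irrefl u h
    · exact h

variable {G : SimpleGraph V} {k : ℕ} {c : V → Finset (Fin k)}

@[simp] theorem extGraph_adj_inl_inl {u v : V} :
    (ExtGraph G c).Adj (Sum.inl u) (Sum.inl v) ↔ G.Adj u v := Iff.rfl

@[simp] theorem extGraph_adj_inl_inr {u : V} {i : Fin k} :
    (ExtGraph G c).Adj (Sum.inl u) (Sum.inr i) ↔ i ∈ c u := Iff.rfl

@[simp] theorem extGraph_adj_inr_inl {u : V} {i : Fin k} :
    (ExtGraph G c).Adj (Sum.inr i) (Sum.inl u) ↔ i ∈ c u := Iff.rfl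

@[simp] theorem extGraph_adj_inr_inr {i j : Fin k} :
    ¬ (ExtGraph G c).Adj (Sum.inr i) (Sum.inr j) := fun h => h

theorem ext_prime [Fintype V] (G : SimpleGraph V) {k : ℕ} (hk : 2 ≤ k)
    (c : V → Finset (Fin k)) (C : Set V)
    (hCmod : G.IsModule C) (hCcl : G.IsClique C)
    (hMF : ∀ N : Set V, G.IsModule N → TwoElts N → ∃ u ∈ N, ∃ w ∈ N, c u ≠ c w)
    (hsing : ∀ i : Fin k, ∃ r ∈ C, c r = {i})
    (hnemp : ∀ v, c v = ∅ → ∃ w, G.Adj v w)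
    (hnuniv : ∀ v, c v = Finset.univ → ∃ w, w ≠ v ∧ ¬ G.Adj v w)
    (hboth : ∀ v w, c v = ∅ → c w = Finset.univ → False)
    (hcard4 : 4 ≤ Fintype.card V + k) :
    (ExtGraph G c).IsPrimeGraph := by
  constructor
  · rw [Fintype.card_sum, Fintype.card_fin]; exact hcard4
  intro M hM
  by_cases h2 : TwoElts M
  case neg =>
    by_cases hMe : M = ∅
    · exact Or.inl hMe
    · refine Or.inr (Or.inl ?_)
      obtain ⟨a, ha⟩ := Set.nonempty_iff_ne_empty.mpr hMe
      refine ⟨a, ?_⟩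
      ext b
      simp only [Set.mem_singleton_iff]
      constructor
      · intro hb
        by_contra hba
        exact h2 ⟨b, hb, a, ha, hba⟩
      · rintro rfl; exact ha
  case pos =>
  refine Or.inr (Or.inr ?_)
  set A : Set V := {v | Sum.inl v ∈ M} with hA
  set S : Set (Fin k) := {i | Sum.inr i ∈ M} with hS
  by_cases hSe : S = ∅
  · -- Case (i): M lives on the inl side
    exfalso
    obtain ⟨x, hx, y, hy, hxy⟩ := h2
    have hgetA : ∀ z ∈ M, ∃ v, z = Sum.inl v ∧ v ∈ A := by
      intro z hz
      cases z with
      | inl v => exact ⟨v, rfl, hz⟩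
      | inr i =>
        exfalso
        have : i ∈ S := hz
        rw [hSe] at this
        exact this
    obtain ⟨u, rfl, hu⟩ := hgetA x hx
    obtain ⟨w, rfl, hw⟩ := hgetA y hy
    have huw : u ≠ w := fun h => hxy (by rw [h])
    have hAmod : G.IsModule A := by
      intro v hv
      rcases hM (Sum.inl v) hv with h1 | h1
      · left; intro m hm; exact h1 (Sum.inl m) hm
      · right; intro m hm; exact h1 (Sum.inl m) hm
    obtain ⟨a, ha, b, hb, hab⟩ := hMF A hAmod ⟨u, hu, w, hw, huw⟩
    have key : ∀ a b : V, a ∈ A → b ∈ A → ∀ i, i ∈ c a → i ∉ c b → False := by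
      intro a b ha hb i hia hib
      have hiM : Sum.inr i ∉ M := by
        intro h
        have : i ∈ S := h
        rw [hSe] at this
        exact this
      rcases hM (Sum.inr i) hiM with h1 | h1
      · exact hib (h1 (Sum.inl b) hb)
      · exact h1 (Sum.inl a) ha hia
    by_cases hsub : c a ⊆ c b
    · have : ¬ c b ⊆ c a := fun h => hab (Finset.Subset.antisymm hsub h)
      obtain ⟨i, hi1, hi2⟩ := Finset.not_subset.mp this
      exact key b a hb ha i hi1 hi2
    · obtain ⟨i, hi1, hi2⟩ := Finset.not_subset.mp hsub
      exact key a b ha hb i hi1 hi2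
  by_cases hAe : A = ∅
  · -- Case (ii): M lives on the inr side
    exfalso
    obtain ⟨x, hx, y, hy, hxy⟩ := h2
    have hgetS : ∀ z ∈ M, ∃ i, z = Sum.inr i ∧ i ∈ S := by
      intro z hz
      cases z with
      | inl v =>
        exfalso
        have : v ∈ A := hz
        rw [hAe] at this
        exact this
      | inr i => exact ⟨i, rfl, hz⟩
    obtain ⟨i, rfl, hiS⟩ := hgetS x hx
    obtain ⟨j, rfl, hjS⟩ := hgetS y hy
    have hij : i ≠ j := fun h => hxy (by rw [h])
    obtain ⟨r, hrC, hrc⟩ := hsing i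
    have hrM : Sum.inl r ∉ M := by
      intro h
      have : r ∈ A := h
      rw [hAe] at this
      exact this
    rcases hM (Sum.inl r) hrM with h1 | h1
    · have := h1 (Sum.inr j) hjS
      rw [extGraph_adj_inl_inr, hrc, Finset.mem_singleton] at this
      exact hij this.symm
    · refine h1 (Sum.inr i) hiS ?_
      rw [extGraph_adj_inl_inr, hrc]
      exact Finset.mem_singleton_self i
  -- now A ≠ ∅ and S ≠ ∅
  obtain ⟨a₀, ha₀⟩ := Set.nonempty_iff_ne_empty.mpr hAe
  obtain ⟨i₀, hi₀⟩ := Set.nonempty_iff_ne_empty.mpr hSe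
  by_cases hSu : S = Set.univ
  · -- Case (iii): conclude M = univ
    have htype : ∀ x, x ∉ A →
        (c x = Finset.univ ∧ ∀ a ∈ A, G.Adj x a) ∨ (c x = ∅ ∧ ∀ a ∈ A, ¬ G.Adj x a) := by
      intro x hx
      rcases hM (Sum.inl x) hx with h1 | h1
      · left
        constructor
        · rw [Finset.eq_univ_iff_forall]
          intro i
          have hiS : i ∈ S := by rw [hSu]; trivial
          exact h1 (Sum.inr i) hiS
        · intro a ha; exact h1 (Sum.inl a) ha
      · right
        constructor
        · rw [Finset.eq_empty_iff_forall_notMem]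
          intro i hi
          have hiS : i ∈ S := by rw [hSu]; trivial
          exact h1 (Sum.inr i) hiS hi
        · intro a ha; exact h1 (Sum.inl a) ha
    have hBempty : ∀ x, x ∈ A := by
      by_contra hBne
      push_neg at hBne
      obtain ⟨b, hb⟩ := hBne
      rcases htype b hb with ⟨hcb, hadj⟩ | ⟨hcb, hnadj⟩
      · have hall : ∀ x, x ∉ A → c x = Finset.univ ∧ ∀ a ∈ A, G.Adj x a := by
          intro x hx
          rcases htype x hx with h | ⟨hce, -⟩
          · exact h
          · exact (hboth x b hce hcb).elim
        have hBmod : G.IsModule Aᶜ := by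
          intro x hx
          left
          intro m hm
          exact ((hall m hm).2 x (not_not.mp hx)).symm
        by_cases hB2 : TwoElts (Aᶜ : Set V)
        · obtain ⟨p, hp, q, hq, hpq⟩ := hMF Aᶜ hBmod hB2
          rw [(hall p hp).1, (hall q hq).1] at hpq
          exact hpq rfl
        · have hsingl : ∀ x, x ∉ A → x = b := by
            intro x hx
            by_contra hxb
            exact hB2 ⟨x, hx, b, hb, hxb⟩
          obtain ⟨w, hwb, hwnadj⟩ := hnuniv b hcb
          have hwA : w ∈ A := by
            by_contra hwA
            exact hwb (hsingl w hwA)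
          exact hwnadj (hadj w hwA)
      · have hall : ∀ x, x ∉ A → c x = ∅ ∧ ∀ a ∈ A, ¬ G.Adj x a := by
          intro x hx
          rcases htype x hx with ⟨hcu, -⟩ | h
          · exact (hboth b x hcb hcu).elim
          · exact h
        have hBmod : G.IsModule Aᶜ := by
          intro x hx
          right
          intro m hm hadj
          exact (hall m hm).2 x (not_not.mp hx) hadj.symm
        by_cases hB2 : TwoElts (Aᶜ : Set V)
        · obtain ⟨p, hp, q, hq, hpq⟩ := hMF Aᶜ hBmod hB2
          rw [(hall p hp).1, (hall q hq).1] at hpq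
          exact hpq rfl
        · have hsingl : ∀ x, x ∉ A → x = b := by
            intro x hx
            by_contra hxb
            exact hB2 ⟨x, hx, b, hb, hxb⟩
          obtain ⟨w, hw⟩ := hnemp b hcb
          have hwb : w ≠ b := fun h => G.irrefl (h ▸ hw)
          have hwA : w ∈ A := by
            by_contra hwA
            exact hwb (hsingl w hwA)
          exact hnadj w hwA hw
    rw [Set.eq_univ_iff_forall]
    rintro (v | i)
    · exact hBempty v
    · have : i ∈ S := by rw [hSu]; trivial
      exact this
  · -- Case (iv): mixed with S a proper nonempty subset — contradiction
    exfalso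
    obtain ⟨j, hj⟩ := (Set.ne_univ_iff_exists_notMem S).mp hSu
    obtain ⟨rj, hrjC, hrjc⟩ := hsing j
    have hrjA : rj ∉ A := by
      intro h
      have hjM : Sum.inr j ∉ M := hj
      rcases hM (Sum.inr j) hjM with h1 | h1
      · exact extGraph_adj_inr_inr (h1 (Sum.inr i₀) hi₀)
      · refine h1 (Sum.inl rj) h ?_
        rw [extGraph_adj_inr_inl, hrjc]
        exact Finset.mem_singleton_self j
    have hrjnadj : ∀ a ∈ A, ¬ G.Adj rj a := by
      have hrjM : Sum.inl rj ∉ M := hrjA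
      rcases hM (Sum.inl rj) hrjM with h1 | h1
      · exfalso
        have := h1 (Sum.inr i₀) hi₀
        rw [extGraph_adj_inl_inr, hrjc, Finset.mem_singleton] at this
        exact hj (this ▸ hi₀)
      · intro a ha; exact h1 (Sum.inl a) ha
    by_cases hAC : ∃ a ∈ A, a ∈ C
    · obtain ⟨a, haA, haC⟩ := hAC
      have hne' : rj ≠ a := fun h => hrjA (h ▸ haA)
      exact hrjnadj a haA (hCcl hrjC haC hne')
    · obtain ⟨ri, hriC, hric⟩ := hsing i₀
      have hriA : ri ∉ A := fun h => hAC ⟨ri, h, hriC⟩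
      have hriadj : ∀ a ∈ A, G.Adj ri a := by
        have hriM : Sum.inl ri ∉ M := hriA
        rcases hM (Sum.inl ri) hriM with h1 | h1
        · intro a ha; exact h1 (Sum.inl a) ha
        · exfalso
          refine h1 (Sum.inr i₀) hi₀ ?_
          rw [extGraph_adj_inl_inr, hric]
          exact Finset.mem_singleton_self i₀
      have ha₀C : a₀ ∉ C := fun h => hAC ⟨a₀, ha₀, h⟩
      rcases hCmod a₀ ha₀C with h1 | h1
      · exact hrjnadj a₀ ha₀ (h1 rj hrjC).symm
      · exact h1 ri hriC (hriadj a₀ ha₀).symm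



theorem key [Fintype V] (G : SimpleGraph V)
    (hωα : G.modularStabilityNumber ≤ G.modularCliqueNumber)
    (h2 : 2 ≤ G.modularCliqueNumber) :
    G.primeBound ≤ Nat.clog 2 (G.modularCliqueNumber + 1) := by
  classical
  set m := G.modularCliqueNumber with hm
  set k := Nat.clog 2 (m + 1) with hkdef
  -- arithmetic facts
  have hm2k : m + 1 ≤ 2 ^ k := Nat.le_pow_clog (by norm_num) _
  have hk2 : 2 ≤ k := by
    have : 2 ^ 1 < m + 1 := by omega
    have := (Nat.lt_clog_iff_pow_lt (by norm_num)).mpr this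
    omega
  have hmlow : 2 ^ (k - 1) ≤ m := by
    have h3 : 2 ^ (k - 1) < m + 1 :=
      (Nat.lt_clog_iff_pow_lt (by norm_num : (1:ℕ) < 2)).mp (by omega)
    omega
  -- the clique-module set is nonempty and bounded
  have hSne : (0 : ℕ) ∈ {n : ℕ | ∃ M : Set V, G.IsModule M ∧ G.IsClique M ∧ M.ncard = n} := by
    refine ⟨∅, ?_, ?_, by simp⟩
    · intro v hv
      exact Or.inr fun m hm => absurd hm (Set.notMem_empty m)
    · exact Set.pairwise_empty _
  have hSbdd : BddAbove {n : ℕ | ∃ M : Set V, G.IsModule M ∧ G.IsClique M ∧ M.ncard = n} := by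
    refine ⟨Fintype.card V, ?_⟩
    rintro n ⟨M, -, -, rfl⟩
    have hle1 : M.ncard ≤ (Set.univ : Set V).ncard :=
      Set.ncard_le_ncard (Set.subset_univ _) (Set.toFinite _)
    rwa [Set.ncard_univ, Nat.card_eq_fintype_card] at hle1
  have hSbddc : BddAbove {n : ℕ | ∃ M : Set V, Gᶜ.IsModule M ∧ Gᶜ.IsClique M ∧ M.ncard = n} := by
    refine ⟨Fintype.card V, ?_⟩
    rintro n ⟨M, -, -, rfl⟩
    have hle1 : M.ncard ≤ (Set.univ : Set V).ncard :=
      Set.ncard_le_ncard (Set.subset_univ _) (Set.toFinite _)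
    rwa [Set.ncard_univ, Nat.card_eq_fintype_card] at hle1
  -- extract the extremal clique module C
  have hmem : m ∈ {n : ℕ | ∃ M : Set V, G.IsModule M ∧ G.IsClique M ∧ M.ncard = n} :=
    Nat.sSup_mem ⟨0, hSne⟩ hSbdd
  obtain ⟨C, hCmod, hCcl, hCcard⟩ := hmem
  -- MBound
  have hMB : MBound G m := by
    rintro N hN (hcl | hcl)
    · exact le_csSup hSbdd ⟨N, hN, hcl, rfl⟩
    · refine le_trans (le_csSup hSbddc ⟨N, mod_compl hN, hcl, rfl⟩) hωα
  -- the module-free coloring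
  obtain ⟨φ, hφ, hMFφ⟩ := theta_main V G m h2 hMB
  -- cardinality facts
  have hcardV : m ≤ Fintype.card V := by
    rw [← hCcard]
    have hle1 : C.ncard ≤ (Set.univ : Set V).ncard :=
      Set.ncard_le_ncard (Set.subset_univ _) (Set.toFinite _)
    rwa [Set.ncard_univ, Nat.card_eq_fintype_card] at hle1
  -- the palette
  set E₀ : Finset (Fin k) := if ∃ v, ∀ w, ¬ G.Adj v w then ∅ else Finset.univ with hE₀def
  set c : V → Finset (Fin k) := fun v => pal k E₀ (φ v) with hcdef
  have hφv1 : ∀ v, φ v + 1 < 2 ^ k := fun v => by have := hφ v; omega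
  -- module-freeness in palette form
  have hMFc : ∀ N : Set V, G.IsModule N → TwoElts N → ∃ u ∈ N, ∃ w ∈ N, c u ≠ c w := by
    intro N hN ht
    obtain ⟨u, hu, w, hw, hne⟩ := hMFφ N hN ht
    exact ⟨u, hu, w, hw, fun h => hne (pal_inj (hφv1 u) (hφv1 w) h)⟩
  -- φ is injective on C
  have hφCinj : ∀ r ∈ C, ∀ r' ∈ C, r ≠ r' → φ r ≠ φ r' := by
    intro r hr r' hr' hne
    have hpm : G.IsModule {r, r'} := pair_module_of_clique hCmod hCcl hr hr'
    obtain ⟨u, hu, w, hw, hcuw⟩ := hMFφ _ hpm ⟨r, by simp, r', by simp, hne⟩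
    rcases hu with rfl | rfl <;> rcases hw with rfl | rfl
    · exact absurd rfl hcuw
    · exact hcuw
    · exact fun h => hcuw h.symm
    · exact absurd rfl hcuw
  -- surjectivity of φ from C onto Fin m
  have hCfin : Finite ↑C := Set.toFinite C |>.to_subtype
  have hφsurj : ∀ j : Fin m, ∃ r ∈ C, φ r = (j : ℕ) := by
    have hinj : Function.Injective (fun r : ↑C => (⟨φ ↑r, hφ ↑r⟩ : Fin m)) := by
      intro r r' h
      by_contra hne
      have hne' : (r : V) ≠ (r' : V) := fun hh => hne (Subtype.ext hh)
      exact hφCinj ↑r r.2 ↑r' r'.2 hne' (by simpa [Fin.ext_iff] using h)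
    have hcardC : Nat.card ↑C = Nat.card (Fin m) := by
      rw [Nat.card_coe_set_eq, hCcard, Nat.card_eq_fintype_card, Fintype.card_fin]
    have hbij := (Nat.bijective_iff_injective_and_card _).mpr ⟨hinj, hcardC⟩
    intro j
    obtain ⟨r, hr⟩ := hbij.2 j
    exact ⟨↑r, r.2, by simpa [Fin.ext_iff] using hr⟩
  -- singleton colors are realized on C
  have hsing : ∀ i : Fin k, ∃ r ∈ C, c r = {i} := by
    intro i
    have hik : 2 ^ (i : ℕ) < 2 ^ k := Nat.pow_lt_pow_right (by norm_num) i.2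
    have hile : 2 ^ (i : ℕ) ≤ 2 ^ (k - 1) := Nat.pow_le_pow_right (by norm_num) (by omega)
    have hjm : 2 ^ (i : ℕ) - 1 < m := by
      have : (0:ℕ) < 2 ^ (i : ℕ) := Nat.two_pow_pos _
      omega
    obtain ⟨r, hrC, hrφ⟩ := hφsurj ⟨2 ^ (i : ℕ) - 1, hjm⟩
    refine ⟨r, hrC, ?_⟩
    have hsne : ({i} : Finset (Fin k)) ≠ E₀ := by
      intro h
      rw [hE₀def] at h
      split_ifs at h with hc
      · exact Finset.singleton_ne_empty i h
      · have := congrArg Finset.card h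
        rw [Finset.card_singleton, Finset.card_univ, Fintype.card_fin] at this
        omega
    rw [hcdef]
    show pal k E₀ (φ r) = {i}
    rw [hrφ]
    exact pal_eq_singleton hik hsne
  -- no isolated vertex is colored ∅
  have hnemp : ∀ v, c v = ∅ → ∃ w, G.Adj v w := by
    intro v hv
    have hE := pal_eq_empty (hφv1 v) hv
    have hEne : E₀ ≠ ∅ := by
      rw [hE]
      exact bits_ne_empty (by omega) (hφv1 v)
    have hniso : ¬ ∃ z, ∀ w, ¬ G.Adj z w := by
      intro hiso
      rw [hE₀def, if_pos hiso] at hEne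
      exact hEne rfl
    push_neg at hniso
    obtain ⟨w, hw⟩ := hniso v
    exact ⟨w, hw⟩
  -- nontriviality
  have hnt : TwoElts (Set.univ : Set V) := by
    have : Nontrivial V := by
      refine nontrivial_of_two_le_card ?_
      rw [Nat.card_eq_fintype_card]
      omega
    obtain ⟨a, b, hab⟩ := this
    exact ⟨a, trivial, b, trivial, hab⟩
  -- no universal vertex is colored univ
  have hnuniv : ∀ v, c v = Finset.univ → ∃ w, w ≠ v ∧ ¬ G.Adj v w := by
    intro v hv
    have hEne : E₀ ≠ Finset.univ := pal_eq_univ (by omega) hv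
    have hiso : ∃ z, ∀ w, ¬ G.Adj z w := by
      by_contra hniso
      rw [hE₀def, if_neg hniso] at hEne
      exact hEne rfl
    obtain ⟨z, hz⟩ := hiso
    by_contra hcon
    push_neg at hcon
    exact not_isolated_and_universal hnt hz fun w hw => (hcon w hw)
  -- not both ∅ and univ occur
  have hboth : ∀ v w, c v = ∅ → c w = Finset.univ → False := by
    intro v w hv hw
    have h1 := pal_eq_empty (hφv1 v) hv
    have h2' := pal_eq_univ (k := k) (by omega) hw
    have h3 : E₀ ≠ ∅ := by
      rw [h1]
      exact bits_ne_empty (by omega) (hφv1 v)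
    rw [hE₀def] at h2' h3
    split_ifs at h2' h3 with hc
    · exact h3 rfl
    · exact h2' rfl
  -- assemble
  have hprime := ext_prime G hk2 c C hCmod hCcl hMFc hsing hnemp hnuniv hboth
    (by omega)
  have hext : G.IsExtension (ExtGraph G c) := fun u v => extGraph_adj_inl_inl
  have hmem : k ∈ {p : ℕ | ∃ H : SimpleGraph (V ⊕ Fin p), G.IsExtension H ∧ H.IsPrimeGraph} :=
    ⟨ExtGraph G c, hext, hprime⟩
  exact Nat.sInf_le hmem



theorem primeBound_dir [Fintype V] (G : SimpleGraph V) (p : ℕ)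
    (h : ∃ H : SimpleGraph (V ⊕ Fin p), Gᶜ.IsExtension H ∧ H.IsPrimeGraph) :
    ∃ H : SimpleGraph (V ⊕ Fin p), G.IsExtension H ∧ H.IsPrimeGraph := by
  obtain ⟨H, hext, hpr⟩ := h
  refine ⟨Hᶜ, ?_, ?_, ?_⟩
  · intro u v
    rw [SimpleGraph.compl_adj]
    constructor
    · rintro ⟨hne, hH⟩
      have hne' : u ≠ v := fun h => hne (by rw [h])
      by_contra hG
      exact hH ((hext u v).mpr ((SimpleGraph.compl_adj G u v).mpr ⟨hne', hG⟩))
    · intro hG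
      refine ⟨fun h => G.ne_of_adj hG (Sum.inl_injective h), fun hH => ?_⟩
      exact ((SimpleGraph.compl_adj G u v).mp ((hext u v).mp hH)).2 hG
  · exact hpr.1
  · intro M hM
    exact hpr.2 M (mod_compl_iff.mpr hM)

theorem primeBound_compl [Fintype V] (G : SimpleGraph V) :
    Gᶜ.primeBound = G.primeBound := by
  unfold SimpleGraph.primeBound
  congr 1
  ext p
  constructor
  · intro h
    exact primeBound_dir G p h
  · intro h
    refine primeBound_dir Gᶜ p ?_
    rw [compl_compl]
    exact h



end PrimeExt

/-- upper bound `p(G) ≤ ⌈log₂(max(α_M(G), ω_M(G)) + 1)⌉`. -/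
theorem primeBound_upper_bound {V : Type*} [Fintype V] (G : SimpleGraph V)
    (h : 2 ≤ max G.modularStabilityNumber G.modularCliqueNumber) :
    G.primeBound ≤ Nat.clog 2 (max G.modularStabilityNumber G.modularCliqueNumber + 1) := by
  rcases le_total G.modularStabilityNumber G.modularCliqueNumber with hle | hle
  · rw [max_eq_right hle] at h ⊢
    exact PrimeExt.key G hle h
  · rw [max_eq_left hle] at h ⊢
    have h1 : Gᶜ.modularStabilityNumber ≤ Gᶜ.modularCliqueNumber := by
      show Gᶜᶜ.modularCliqueNumber ≤ Gᶜ.modularCliqueNumber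
      rw [compl_compl]
      exact hle
    have h2 : 2 ≤ Gᶜ.modularCliqueNumber := h
    have hres := PrimeExt.key Gᶜ h1 h2
    rw [PrimeExt.primeBound_compl] at hres
    exact hres
end

section
/- Let G be a finite graph with max(α_M(G), ω_M(G)) ≥ 2. Then the maximal (under inclusion) modules of G of size at least 2 that are cliques or stable sets are pairwise disjoint. -/
lemma aux_compl_module {V : Type*} {G : SimpleGraph V} {M : Set V} (hM : G.IsModule M) :
    Gᶜ.IsModule M := by
  intro v hv
  rcases hM v hv with h | h
  · right; intro m hm hc; exact hc.2 (h m hm)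
  · left; intro m hm; exact ⟨fun he => hv (he ▸ hm), h m hm⟩

lemma aux_union_module {V : Type*} {G : SimpleGraph V} {M N : Set V} (hM : G.IsModule M)
    (hN : G.IsModule N) {x : V} (hxM : x ∈ M) (hxN : x ∈ N) : G.IsModule (M ∪ N) := by
  intro v hv
  have hvM : v ∉ M := fun h => hv (Or.inl h)
  have hvN : v ∉ N := fun h => hv (Or.inr h)
  rcases hM v hvM with hA | hA <;> rcases hN v hvN with hB | hB
  · left; rintro m (hm | hm); exacts [hA m hm, hB m hm]
  · exact absurd (hA x hxM) (hB x hxN)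
  · exact absurd (hB x hxN) (hA x hxM)
  · right; rintro m (hm | hm); exacts [hA m hm, hB m hm]

lemma aux_union_clique {V : Type*} {G : SimpleGraph V} {M N : Set V} (hM : G.IsModule M)
    (hN : G.IsModule N) (hMc : G.IsClique M) (hNc : G.IsClique N) {x : V} (hxM : x ∈ M)
    (hxN : x ∈ N) : G.IsClique (M ∪ N) := by
  have key : ∀ a ∈ M, ∀ b ∈ N, a ≠ b → G.Adj a b := by
    intro a ha b hb hab
    by_cases hbM : b ∈ M
    · exact hMc ha hbM hab
    · rcases hM b hbM with h | h
      · exact (h a ha).symm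
      · exfalso
        have hbx : b ≠ x := fun he => hbM (he ▸ hxM)
        exact h x hxM (hNc hb hxN hbx)
  rintro a (ha | ha) b (hb | hb) hab
  · exact hMc ha hb hab
  · exact key a ha b hb hab
  · exact (key b hb a ha hab.symm).symm
  · exact hNc ha hb hab

lemma aux_mixed_false {V : Type*} {G : SimpleGraph V} {M N : Set V} (hM : G.IsModule M)
    (hN : G.IsModule N) (hMc : G.IsClique M) (hNs : G.IsStableSet N)
    (hMcard : 2 ≤ M.ncard) (hNcard : 2 ≤ N.ncard) {x : V} (hxM : x ∈ M) (hxN : x ∈ N) :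
    False := by
  obtain ⟨u, huM, hux⟩ := Set.exists_ne_of_one_lt_ncard (by omega : 1 < M.ncard) x
  obtain ⟨v, hvN, hvx⟩ := Set.exists_ne_of_one_lt_ncard (by omega : 1 < N.ncard) x
  have hadj_ux : G.Adj u x := hMc huM hxM hux
  have huN : u ∉ N := fun huN => (hNs huN hxN hux).2 hadj_ux
  have huv : G.Adj u v := by
    rcases hN u huN with h | h
    · exact h v hvN
    · exact absurd hadj_ux (h x hxN)
  have hvM : v ∉ M := fun hvM => (hNs hvN hxN hvx).2 (hMc hvM hxM hvx)
  rcases hM v hvM with h | h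
  · exact (hNs hvN hxN hvx).2 (h x hxM)
  · exact h u huM huv.symm

/-- the maximal modules of size at least 2 that are cliques or stable sets
are pairwise disjoint. -/
theorem maximal_clique_or_stable_modules_pairwise_disjoint {V : Type*} [Fintype V]
    (G : SimpleGraph V)
    (h : 2 ≤ max G.modularStabilityNumber G.modularCliqueNumber) :
    ∀ M N : Set V,
      M ∈ {X : Set V | G.IsModule X ∧ 2 ≤ X.ncard ∧ (G.IsClique X ∨ G.IsStableSet X)} →
      (∀ X ∈ {X : Set V | G.IsModule X ∧ 2 ≤ X.ncard ∧ (G.IsClique X ∨ G.IsStableSet X)},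
        M ⊆ X → M = X) →
      N ∈ {X : Set V | G.IsModule X ∧ 2 ≤ X.ncard ∧ (G.IsClique X ∨ G.IsStableSet X)} →
      (∀ X ∈ {X : Set V | G.IsModule X ∧ 2 ≤ X.ncard ∧ (G.IsClique X ∨ G.IsStableSet X)},
        N ⊆ X → N = X) →
      M ≠ N → Disjoint M N := by
  rintro M N ⟨hMmod, hMcard, hMtype⟩ hMmax ⟨hNmod, hNcard, hNtype⟩ hNmax hne
  by_contra hdis
  obtain ⟨x, hxM, hxN⟩ := Set.not_disjoint_iff.mp hdis
  have hUmod := aux_union_module hMmod hNmod hxM hxN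
  have hUcard : 2 ≤ (M ∪ N).ncard :=
    le_trans hMcard (Set.ncard_le_ncard Set.subset_union_left (Set.toFinite _))
  have contra : ∀ h : G.IsClique (M ∪ N) ∨ G.IsStableSet (M ∪ N), False := by
    intro hty
    have hmem : M ∪ N ∈ {X : Set V | G.IsModule X ∧ 2 ≤ X.ncard ∧
        (G.IsClique X ∨ G.IsStableSet X)} := ⟨hUmod, hUcard, hty⟩
    have h1 := hMmax _ hmem Set.subset_union_left
    have h2 := hNmax _ hmem Set.subset_union_right
    exact hne (h1.trans h2.symm)
  rcases hMtype with hMc | hMs <;> rcases hNtype with hNc | hNs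
  · exact contra (Or.inl (aux_union_clique hMmod hNmod hMc hNc hxM hxN))
  · exact aux_mixed_false hMmod hNmod hMc hNs hMcard hNcard hxM hxN
  · exact aux_mixed_false hNmod hMmod hNc hMs hNcard hMcard hxN hxM
  · exact contra (Or.inr (aux_union_clique (aux_compl_module hMmod)
      (aux_compl_module hNmod) hMs hNs hxM hxN))
end
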